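/- Fix an integer δ > 2. There is no finite simple graph G = (V,E) satisfying all of the following conditions: (i) G is 2-connected; (ii) G∖e is 2-connected for every edge e; (iii) G/e is 2-connected for every edge e; (iv) |E| = δ(|V|−1); (v) |E(S)| + 1 = δ(|S|−1) for every good flat S ⊆ V with more than two vertices. -/

import Mathlib

open SimpleGraph
open scoped Pointwise

namespace Gor

/-! ### Graph-theoretic notions -/

/-- A graph is `2`-connected if it is connected and remains connected after deletion of any
single vertex.  A single edge `K₂` counts as `2`-connected. -/
def IsTwoConnected {V : Type*} (G : SimpleGraph V) : Prop :=
  G.Connected ∧ ∀ v : V, (G.induce {u : V | u ≠ v}).Connected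

/-- `E(S)`: the set of edges of `G` with both endpoints in `S`. -/
def edgesIn {V : Type*} (G : SimpleGraph V) (S : Set V) : Set (Sym2 V) :=
  {e ∈ G.edgeSet | ∀ v ∈ e, v ∈ S}

/-- The simple graph obtained from `G` by contracting all edges in `F`: its vertices are the
connected components of the graph with edge set `F`, two being adjacent if some edge of `G`
joins them. -/
def contractEdges {V : Type*} (G : SimpleGraph V) (F : Set (Sym2 V)) :
    SimpleGraph (SimpleGraph.fromEdgeSet F).ConnectedComponent :=
  SimpleGraph.fromRel fun c d => ∃ u v : V, G.Adj u v ∧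
    (SimpleGraph.fromEdgeSet F).connectedComponentMk u = c ∧
    (SimpleGraph.fromEdgeSet F).connectedComponentMk v = d

/-- `S` is a good flat of `G`: the induced subgraph `G[S]` is `2`-connected and the contraction
of all edges of `E(S)` in `G` is `2`-connected. -/
def IsGoodFlat {V : Type*} (G : SimpleGraph V) (S : Set V) : Prop :=
  IsTwoConnected (G.induce S) ∧ IsTwoConnected (contractEdges G (edgesIn G S))

/-- The weight function `w : E → {1, δ-1}` with `w e = 1` whenever `G∖e` is `2`-connected and
`w e = δ - 1` whenever `G/e` is `2`-connected. -/
def IsCanonicalWeight {V : Type*} (G : SimpleGraph V) (δ : ℕ) (w : Sym2 V → ℕ) : Prop :=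
  (∀ e ∈ G.edgeSet, w e = 1 ∨ w e = δ - 1) ∧
  (∀ e ∈ G.edgeSet, IsTwoConnected (G.deleteEdges {e}) → w e = 1) ∧
  (∀ e ∈ G.edgeSet, IsTwoConnected (contractEdges G {e}) → w e = δ - 1)

/-- A `2`-connected graph `G` satisfies `(♠)_δ` via the weight function `w`. -/
def SatisfiesSpade {V : Type*} (G : SimpleGraph V) (δ : ℕ) (w : Sym2 V → ℕ) : Prop :=
  IsTwoConnected G ∧ IsCanonicalWeight G δ w ∧
  (∑ᶠ e ∈ G.edgeSet, w e) = δ * (Nat.card V - 1) ∧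
  ∀ S : Set V, IsGoodFlat G S → (∑ᶠ e ∈ edgesIn G S, w e) + 1 = δ * (S.ncard - 1)

/-- The number of `2`-connected components (blocks) of a graph: the number of inclusion-maximal
vertex subsets inducing a `2`-connected subgraph. -/
noncomputable def numBlocks {V : Type*} (G : SimpleGraph V) : ℕ :=
  {S : Set V | IsTwoConnected (G.induce S) ∧
    ∀ T : Set V, S ⊆ T → IsTwoConnected (G.induce T) → S = T}.ncard

/-! ### Lattice polytopes and the Gorenstein property -/

/-- A point of `ℝ^η` is a lattice point if all its coordinates are integers. -/
def IsLatticePoint {η : Type*} (x : η → ℝ) : Prop := ∀ i, ∃ z : ℤ, x i = z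

/-- The cone over a polytope `P ⊆ ℝ^η`, living in `ℝ^η × ℝ`. -/
def coneOver {η : Type*} (P : Set (η → ℝ)) : Set ((η → ℝ) × ℝ) :=
  {y | ∃ t : ℝ, ∃ p ∈ P, 0 ≤ t ∧ y = (t • p, t)}

/-- The lattice affinely spanned by the lattice points of `P`, placed at height one;
i.e. the subgroup of `ℝ^η × ℝ` generated by `{(p, 1) : p a lattice point of P}`. -/
def coneLattice {η : Type*} (P : Set (η → ℝ)) : Submodule ℤ ((η → ℝ) × ℝ) :=
  Submodule.span ℤ {y | ∃ p ∈ P, IsLatticePoint p ∧ y = (p, 1)}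

/-- `h` is a linear form cutting out a facet-supporting hyperplane of the cone over `P`:
it is nonnegative on the cone and vanishes on a subset of the cone spanning one dimension less
than the cone itself. -/
def IsFacetForm {η : Type*} (P : Set (η → ℝ)) (h : ((η → ℝ) × ℝ) →ₗ[ℝ] ℝ) : Prop :=
  (∀ y ∈ coneOver P, 0 ≤ h y) ∧
  Module.finrank ℝ (Submodule.span ℝ {y ∈ coneOver P | h y = 0}) + 1 =
    Module.finrank ℝ (Submodule.span ℝ (coneOver P))

/-- `h` is reduced with respect to the lattice spanned by `P`: it takes integer values on the
lattice and attains the value `1` there. -/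
def IsReducedForm {η : Type*} (P : Set (η → ℝ)) (h : ((η → ℝ) × ℝ) →ₗ[ℝ] ℝ) : Prop :=
  (∀ y ∈ coneLattice P, ∃ z : ℤ, h y = z) ∧ ∃ y ∈ coneLattice P, h y = 1

/-- A polytope `P`, regarded as full-dimensional in the affine lattice it spans, is
`δ`-Gorenstein if there is a lattice point `v ∈ δP` with `h (v, δ) = 1` for the reduced
equation `h` of every facet-supporting hyperplane of the cone over `P`. -/
def IsDeltaGorenstein {η : Type*} (P : Set (η → ℝ)) (δ : ℕ) : Prop :=
  ∃ v : η → ℝ, v ∈ (δ : ℝ) • P ∧ (v, (δ : ℝ)) ∈ coneLattice P ∧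
    ∀ h : ((η → ℝ) × ℝ) →ₗ[ℝ] ℝ, IsFacetForm P h → IsReducedForm P h → h (v, (δ : ℝ)) = 1

/-- A polytope is Gorenstein if it is `δ`-Gorenstein for some positive integer `δ`. -/
def IsGorenstein {η : Type*} (P : Set (η → ℝ)) : Prop :=
  ∃ δ : ℕ, 0 < δ ∧ IsDeltaGorenstein P δ

/-! ### Graphic matroids of simple graphs and their polytopes -/

/-- An independent set of the graphic matroid of `G`: a set of edges forming a forest. -/
def IsGraphicIndep {V : Type*} (G : SimpleGraph V) (I : Set (Sym2 V)) : Prop :=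
  I ⊆ G.edgeSet ∧ (SimpleGraph.fromEdgeSet I).IsAcyclic

/-- A basis of the graphic matroid of `G`: a maximal forest (spanning forest). -/
def IsGraphicBasis {V : Type*} (G : SimpleGraph V) (B : Set (Sym2 V)) : Prop :=
  IsGraphicIndep G B ∧ ∀ e ∈ G.edgeSet, e ∉ B → ¬ IsGraphicIndep G (insert e B)

/-- The base polytope `B(M(G))` of the graphic matroid of `G`: the convex hull of the
indicator vectors of the bases. -/
def basePolytope {V : Type*} (G : SimpleGraph V) : Set (Sym2 V → ℝ) :=
  convexHull ℝ {x | ∃ B : Set (Sym2 V), IsGraphicBasis G B ∧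
    x = B.indicator fun _ => (1 : ℝ)}

/-- The base polytope `B(M(G))`, regarded inside `ℝ^E` where `E` is the edge set of `G`. -/
def basePolytopeE {V : Type*} (G : SimpleGraph V) : Set (↥G.edgeSet → ℝ) :=
  convexHull ℝ {x | ∃ B : Set (Sym2 V), IsGraphicBasis G B ∧
    x = (Subtype.val ⁻¹' B).indicator fun _ => (1 : ℝ)}

/-- A homogeneous inequality `g x ≥ 0` is valid for `P` and defines a facet (a supporting
hyperplane whose intersection with `P` has affine dimension one less than `P`). -/
def IsSupportingFaceIneq {α : Type*} (P : Set (α → ℝ)) (g : (α → ℝ) → ℝ) : Prop :=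
  (∀ x ∈ P, 0 ≤ g x) ∧
  Module.finrank ℝ (vectorSpan ℝ {x ∈ P | g x = 0}) + 1 =
    Module.finrank ℝ (vectorSpan ℝ P)

/-! ### Multigraphs -/

/-- A finite undirected loopless multigraph on a vertex type `V` with edge type `E`. -/
structure Multigraph (V E : Type*) where
  ends : E → Sym2 V
  loopless : ∀ e, ¬ (ends e).IsDiag

/-- The underlying simple graph of a multigraph. -/
def Multigraph.toSimple {V E : Type*} (G : Multigraph V E) : SimpleGraph V :=
  SimpleGraph.fromEdgeSet (Set.range G.ends)

/-- `E(S)` for a multigraph: the set of edges with both endpoints in `S`. -/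
def Multigraph.edgesIn {V E : Type*} (G : Multigraph V E) (S : Set V) : Set E :=
  {e | ∀ v ∈ G.ends e, v ∈ S}

/-- A set of edges of a multigraph is a forest (an independent set of the graphic matroid):
no two parallel edges and no cycle. -/
def IsMultiForest {V E : Type*} (G : Multigraph V E) (I : Set E) : Prop :=
  Set.InjOn G.ends I ∧ (SimpleGraph.fromEdgeSet (G.ends '' I)).IsAcyclic

/-- The independence polytope `P(M(G))` of the graphic matroid of a multigraph `G`. -/
def multiIndepPolytope {V E : Type*} (G : Multigraph V E) : Set (E → ℝ) :=
  convexHull ℝ {x | ∃ I : Set E, IsMultiForest G I ∧ x = I.indicator fun _ => (1 : ℝ)}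

/-- The rank of a set of edges in the graphic matroid of a multigraph. -/
noncomputable def mrank {V E : Type*} (G : Multigraph V E) (A : Set E) : ℕ :=
  sSup {n | ∃ I ⊆ A, IsMultiForest G I ∧ I.ncard = n}

/-- A flat of the graphic matroid of a multigraph: adding any further edge increases the rank. -/
def IsGraphicFlat {V E : Type*} (G : Multigraph V E) (A : Set E) : Prop :=
  ∀ e : E, e ∉ A → mrank G (insert e A) ≠ mrank G A

/-- A circuit of the graphic matroid of a multigraph: a minimal dependent set of edges. -/
def IsMultiCircuit {V E : Type*} (G : Multigraph V E) (C : Set E) : Prop :=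
  ¬ IsMultiForest G C ∧ ∀ C' ⊂ C, IsMultiForest G C'

/-- The restriction of the graphic matroid of `G` to `A` is a connected matroid:
`A` is nonempty and any two distinct elements of `A` lie on a common circuit inside `A`. -/
def ConnectedRestriction {V E : Type*} (G : Multigraph V E) (A : Set E) : Prop :=
  A.Nonempty ∧ ∀ e ∈ A, ∀ f ∈ A, e ≠ f → ∃ C ⊆ A, IsMultiCircuit G C ∧ e ∈ C ∧ f ∈ C

/-- `G` is the `m`-blow-up of the simple graph `H`: every edge of `H` is replaced by exactly
`m` parallel edges and there are no other edges. -/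
def IsBlowUp {V E : Type*} (G : Multigraph V E) (m : ℕ) (H : SimpleGraph V) : Prop :=
  (∀ p ∈ H.edgeSet, {e : E | G.ends e = p}.ncard = m) ∧
  ∀ p : Sym2 V, p ∉ H.edgeSet → {e : E | G.ends e = p} = ∅

/-- The condition `(♣)_δ`: `(δ-1)|E(S)| + 1 = δ(|S|-1)` for every vertex subset `S` inducing a
`2`-connected subgraph. -/
def ClubCond {V : Type*} (H : SimpleGraph V) (δ : ℕ) : Prop :=
  ∀ S : Set V, IsTwoConnected (H.induce S) →
    (δ - 1) * (edgesIn H S).ncard + 1 = δ * (S.ncard - 1)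

/-! ### Chordality, `K₄` minors, cycle attachments -/

/-- A chordless cycle: a cycle such that every edge of `G` between vertices of the cycle is an
edge of the cycle. -/
def IsChordlessCycle {V : Type*} (G : SimpleGraph V) {v : V} (c : G.Walk v v) : Prop :=
  c.IsCycle ∧ ∀ e ∈ edgesIn G {u : V | u ∈ c.support}, e ∈ c.edges

/-- `G` is `δ`-chordal: every cycle without a chord has exactly `δ + 1` edges. -/
def IsDeltaChordal {V : Type*} (G : SimpleGraph V) (δ : ℕ) : Prop :=
  ∀ (v : V) (c : G.Walk v v), IsChordlessCycle G c → c.length = δ + 1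

/-- `G` has a `K₄` minor: there are four disjoint nonempty connected branch sets pairwise
joined by an edge. -/
def HasK4Minor {V : Type*} (G : SimpleGraph V) : Prop :=
  ∃ B : Fin 4 → Set V, (∀ i, (B i).Nonempty) ∧ (∀ i, (G.induce (B i)).Connected) ∧
    (Pairwise fun i j => Disjoint (B i) (B j)) ∧
    (Pairwise fun i j => ∃ u ∈ B i, ∃ v ∈ B j, G.Adj u v)

/-- One step of attaching a new `(δ+1)`-cycle to an edge: `B` is obtained from `A` by adding
`δ - 1` new vertices forming a path of length `δ` between the endpoints of an edge of
`H[A]`, these being all new edges. -/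
def AttachStep {V : Type*} (H : SimpleGraph V) (δ : ℕ) (A B : Set V) : Prop :=
  ∃ q : Fin (δ + 1) → V, Function.Injective q ∧
    H.Adj (q 0) (q (Fin.last δ)) ∧ q 0 ∈ A ∧ q (Fin.last δ) ∈ A ∧
    (∀ i : Fin (δ + 1), i ≠ 0 → i ≠ Fin.last δ → q i ∉ A) ∧
    B = A ∪ {x | ∃ i : Fin (δ + 1), i ≠ 0 ∧ i ≠ Fin.last δ ∧ q i = x} ∧
    edgesIn H B = edgesIn H A ∪ {e | ∃ i : Fin δ, e = s(q i.castSucc, q i.succ)}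

/-- `H` can be constructed from the clique `K₂` by repeatedly attaching new `(δ+1)`-cycles to
edges of the preceding graph. -/
def ConstructibleFromK2 {V : Type*} (H : SimpleGraph V) (δ : ℕ) : Prop :=
  ∃ (k : ℕ) (S : Fin (k + 1) → Set V),
    (∃ u v : V, H.Adj u v ∧ S 0 = {u, v}) ∧
    S (Fin.last k) = Set.univ ∧
    ∀ i : Fin k, AttachStep H δ (S i.castSucc) (S i.succ)

/-! ### Gluings, subdivisions, collisions, ears -/

/-- `G` (with distinguished edge `ab`) is the gluing of the graphs `Gs i` along the edges
`es i`: the disjoint union with all the edges `es i` identified to the single edge `ab`. -/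
def IsGluing {ι : Type*} {Vf : ι → Type*} {W : Type*} (Gs : ∀ i, SimpleGraph (Vf i))
    (es : ∀ i, Sym2 (Vf i)) (G : SimpleGraph W) (a b : W) : Prop :=
  a ≠ b ∧ G.Adj a b ∧
  ∃ φ : ∀ i, Vf i → W,
    (∀ i, Function.Injective (φ i)) ∧
    (∀ x : W, ∃ i, x ∈ Set.range (φ i)) ∧
    (∀ i, Sym2.map (φ i) (es i) = s(a, b)) ∧
    (∀ i j, i ≠ j → Set.range (φ i) ∩ Set.range (φ j) = {a, b}) ∧
    ∀ x y : W, G.Adj x y ↔ ∃ i, ∃ u v, (Gs i).Adj u v ∧ φ i u = x ∧ φ i v = y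

/-- `G'` together with the path `q` is the subdivision of `G` obtained by replacing the edge
`uv` by a path of `m` edges `q 0, …, q m` through new vertices. -/
def IsSubdivisionAt {V W : Type*} (G : SimpleGraph V) (u v : V) {m : ℕ}
    (G' : SimpleGraph W) (q : Fin (m + 1) → W) : Prop :=
  ∃ φ : V → W, Function.Injective φ ∧ Function.Injective q ∧
    q 0 = φ u ∧ q (Fin.last m) = φ v ∧
    (∀ i : Fin (m + 1), i ≠ 0 → i ≠ Fin.last m → q i ∉ Set.range φ) ∧
    (∀ x : W, x ∈ Set.range φ ∨ x ∈ Set.range q) ∧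
    ∀ x y : W, G'.Adj x y ↔
      ((∃ a b : V, G.Adj a b ∧ s(a, b) ≠ s(u, v) ∧ φ a = x ∧ φ b = y) ∨
       ∃ i : Fin m, s(x, y) = s(q i.castSucc, q i.succ))

/-- `G` (with the distinguished nonadjacent pair `a b`) is the collision of `G₁` and `G₂` on
the edges `e₁, e₂`: the disjoint union with `e₁` and `e₂` identified and then deleted. -/
def IsCollision {V₁ V₂ W : Type*} (G₁ : SimpleGraph V₁) (G₂ : SimpleGraph V₂)
    (e₁ : Sym2 V₁) (e₂ : Sym2 V₂) (G : SimpleGraph W) (a b : W) : Prop :=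
  a ≠ b ∧ ¬ G.Adj a b ∧
  ∃ (φ₁ : V₁ → W) (φ₂ : V₂ → W),
    Function.Injective φ₁ ∧ Function.Injective φ₂ ∧
    Sym2.map φ₁ e₁ = s(a, b) ∧ Sym2.map φ₂ e₂ = s(a, b) ∧
    (∀ x : W, x ∈ Set.range φ₁ ∨ x ∈ Set.range φ₂) ∧
    Set.range φ₁ ∩ Set.range φ₂ = {a, b} ∧
    ∀ x y : W, G.Adj x y ↔
      ((∃ u v, G₁.Adj u v ∧ s(u, v) ≠ e₁ ∧ φ₁ u = x ∧ φ₁ v = y) ∨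
       (∃ u v, G₂.Adj u v ∧ s(u, v) ≠ e₂ ∧ φ₂ u = x ∧ φ₂ v = y))

/-- The inner vertices of an ear. -/
def earInner {V : Type*} {s : ℕ} (p : Fin (s + 1) → V) : Set V :=
  {x | ∃ i : Fin (s + 1), i ≠ 0 ∧ i ≠ Fin.last s ∧ p i = x}

/-- The edges of an ear. -/
def earEdges {V : Type*} {s : ℕ} (p : Fin (s + 1) → V) : Set (Sym2 V) :=
  {e | ∃ i : Fin s, e = s(p i.castSucc, p i.succ)}

/-- An `s`-ear of `G`: a path with `s` edges whose inner vertices have degree `2` in `G`. -/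
def IsEar {V : Type*} (G : SimpleGraph V) {s : ℕ} (p : Fin (s + 1) → V) : Prop :=
  Function.Injective p ∧ (∀ i : Fin s, G.Adj (p i.castSucc) (p i.succ)) ∧
  ∀ i : Fin (s + 1), i ≠ 0 → i ≠ Fin.last s → (G.neighborSet (p i)).ncard = 2

/-- `T` is the vertex set of an inclusion-maximal proper `2`-connected induced subgraph. -/
def IsMaxProperTwoConnected {V : Type*} (G : SimpleGraph V) (T : Set V) : Prop :=
  IsTwoConnected (G.induce T) ∧ T ≠ Set.univ ∧
  ∀ T' : Set V, T ⊆ T' → T' ≠ Set.univ → IsTwoConnected (G.induce T') → T' = T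

/-! ### `(♠)₂` and `3`-connectivity -/

/-- A `2`-connected graph satisfies the equalities `(♠)₂`:
`|E| = 2(|V|-1)` and `|E(S)| = 2|S| - 3` for every good flat `S`. -/
def Spade2 {V : Type*} (G : SimpleGraph V) : Prop :=
  IsTwoConnected G ∧ G.edgeSet.ncard = 2 * (Nat.card V - 1) ∧
  ∀ S : Set V, IsGoodFlat G S → (edgesIn G S).ncard = 2 * S.ncard - 3

/-- A graph is `3`-connected if it has more than `3` vertices and remains connected after
deletion of any two vertices. -/
def IsThreeConnected {V : Type*} (G : SimpleGraph V) : Prop :=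
  3 < Nat.card V ∧ ∀ u v : V, (G.induce {x : V | x ≠ u ∧ x ≠ v}).Connected

/-! ### Inductive constructions -/

/-- Graphs obtainable from the `δ`-cycle by gluings (Proposition `construction1`) and
`(δ-1)`-subdivisions (Proposition `construction2`). -/
inductive Obtainable (δ : ℕ) : {W : Type} → SimpleGraph W → Prop
  | cycle {W : Type} (G : SimpleGraph W) (e : G ≃g SimpleGraph.cycleGraph δ) :
      Obtainable δ G
  | glue {Vf : Fin (δ - 1) → Type} {W : Type}
      (Gs : ∀ i, SimpleGraph (Vf i)) (ws : ∀ i, Sym2 (Vf i) → ℕ) (es : ∀ i, Sym2 (Vf i))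
      (G : SimpleGraph W) (a b : W)
      (hob : ∀ i, Obtainable δ (Gs i))
      (hsp : ∀ i, SatisfiesSpade (Gs i) δ (ws i))
      (hes : ∀ i, es i ∈ (Gs i).edgeSet)
      (hwe : ∀ i, ws i (es i) = δ - 1)
      (hgl : IsGluing Gs es G a b) : Obtainable δ G
  | subdivide {V W : Type} (G : SimpleGraph V) (w : Sym2 V → ℕ) (u v : V)
      (G' : SimpleGraph W) (q : Fin (δ - 1 + 1) → W)
      (hob : Obtainable δ G) (hsp : SatisfiesSpade G δ w)
      (huv : G.Adj u v) (hw1 : w s(u, v) = 1)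
      (hsub : IsSubdivisionAt G u v G' q) : Obtainable δ G'

/-- Graphs obtainable from the clique `K₄` by a finite sequence of collisions. -/
inductive ObtainableK4 : {W : Type} → SimpleGraph W → Prop
  | k4 {W : Type} (G : SimpleGraph W) (e : G ≃g (⊤ : SimpleGraph (Fin 4))) :
      ObtainableK4 G
  | collide {V₁ V₂ W : Type} (G₁ : SimpleGraph V₁) (G₂ : SimpleGraph V₂)
      (e₁ : Sym2 V₁) (e₂ : Sym2 V₂) (G : SimpleGraph W) (a b : W)
      (h₁ : ObtainableK4 G₁) (h₂ : ObtainableK4 G₂)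
      (he₁ : e₁ ∈ G₁.edgeSet) (he₂ : e₂ ∈ G₂.edgeSet)
      (hc : IsCollision G₁ G₂ e₁ e₂ G a b) : ObtainableK4 G

section Aux

variable {V : Type*} (G : SimpleGraph V)

/-- Reachability within a vertex set `S`. -/
inductive RI (S : Set V) : V → V → Prop
  | refl {u : V} (hu : u ∈ S) : RI S u u
  | cons {u v w : V} (hu : u ∈ S) (ha : G.Adj u v) (h : RI S v w) : RI S u w

variable {G}

lemma RI.mem_left {S : Set V} {u v : V} (h : RI G S u v) : u ∈ S := by
  cases h with
  | refl hu => exact hu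
  | cons hu _ _ => exact hu

lemma RI.mem_right {S : Set V} {u v : V} (h : RI G S u v) : v ∈ S := by
  induction h with
  | refl hu => exact hu
  | cons hu ha h ih => exact ih

lemma RI.mono {S T : Set V} {u v : V} (h : RI G S u v) (hST : S ⊆ T) : RI G T u v := by
  induction h with
  | refl hu => exact .refl (hST hu)
  | cons hu ha h ih => exact .cons (hST hu) ha ih

lemma RI.append {S : Set V} {u v w : V} (h : RI G S u v) (h' : RI G S v w) : RI G S u w := by
  induction h with
  | refl hu => exact h'
  | cons hu ha h ih => exact .cons hu ha (ih h')

lemma RI.single {S : Set V} {u v : V} (hu : u ∈ S) (hv : v ∈ S) (ha : G.Adj u v) :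
    RI G S u v := .cons hu ha (.refl hv)

lemma RI.symm {S : Set V} {u v : V} (h : RI G S u v) : RI G S v u := by
  induction h with
  | refl hu => exact .refl hu
  | cons hu ha h ih => exact ih.append (RI.single h.mem_left hu ha.symm)

/-- Connectivity of the set `S` (within `G`). -/
def Conn (G : SimpleGraph V) (S : Set V) : Prop := S.Nonempty ∧ ∀ u ∈ S, ∀ v ∈ S, RI G S u v

/-- An edge crosses any splitting of a connected set. -/
lemma conn_cross {A B : Set V} (hA : Conn G A) (hBA : B ⊆ A) (hB : B.Nonempty)
    (hAB : (A \ B).Nonempty) : ∃ u ∈ B, ∃ v ∈ A \ B, G.Adj u v := by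
  obtain ⟨u, hu⟩ := hB
  obtain ⟨v, hv⟩ := hAB
  have key : ∀ a b, RI G A a b → a ∈ B → b ∉ B → ∃ u ∈ B, ∃ v ∈ A \ B, G.Adj u v := by
    intro a b h
    induction h with
    | refl _ => exact fun h1 h2 => absurd h1 h2
    | @cons a c _ ha hac h ih =>
      intro haB hbB
      by_cases hcB : c ∈ B
      · exact ih hcB hbB
      · exact ⟨a, haB, c, ⟨h.mem_left, hcB⟩, hac⟩
  exact key u v (hA.2 u (hBA hu) v hv.1) hu hv.2

/-- Truncation: a walk within `A` starting in `B` and ending outside `B`, where the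
`A`-neighbourhood of `B` lies in `B ∪ C`, yields reachability to some point of `C ∩ A`
within `B ∪ (C ∩ A)`. -/
lemma ri_trunc {A B C : Set V} {u v : V} (h : RI G A u v) (huB : u ∈ B) (hv : v ∉ B)
    (hcl : ∀ a ∈ B, ∀ w ∈ A, G.Adj a w → w ∈ B ∪ C) :
    ∃ c ∈ C ∩ A, RI G (B ∪ C ∩ A) u c := by
  revert huB
  induction h with
  | refl hu => exact fun huB => absurd huB hv
  | @cons u w _ hu ha h ih =>
    intro huB
    have hwA : w ∈ A := h.mem_left
    rcases hcl u huB w hwA ha with hwB | hwC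
    · obtain ⟨c, hc, hri⟩ := ih hv hwB
      exact ⟨c, hc, .cons (Or.inl huB) ha hri⟩
    · exact ⟨w, ⟨hwC, hwA⟩, RI.single (Or.inl huB) (Or.inr ⟨hwC, hwA⟩) ha⟩

/-- The reachability component of `u` within `U`. -/
def Kset (U : Set V) (u : V) : Set V := {w | RI G U u w}

lemma Kset_subset {U : Set V} {u : V} : Kset (G := G) U u ⊆ U := fun _ h => h.mem_right

lemma mem_Kset_self {U : Set V} {u : V} (hu : u ∈ U) : u ∈ Kset (G := G) U u := .refl hu

lemma Kset_closed {U : Set V} {u w w' : V} (hw : w ∈ Kset (G := G) U u)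
    (hw' : w' ∈ U) (ha : G.Adj w w') : w' ∈ Kset (G := G) U u :=
  RI.append hw (RI.single hw.mem_right hw' ha)

/-- `RI` within the component itself. -/
lemma ri_Kset {U : Set V} {u a b : V} (hu : RI G U u a) (h : RI G U a b) :
    RI G (Kset (G := G) U u) a b := by
  induction h with
  | refl hv => exact .refl hu
  | @cons a c _ ha hac h ih =>
    have huc : RI G U u c := hu.append (RI.single ha h.mem_left hac)
    exact .cons hu hac (ih huc)

lemma conn_Kset {U : Set V} {u : V} (hu : u ∈ U) : Conn G (Kset (G := G) U u) := by
  refine ⟨⟨u, mem_Kset_self hu⟩, fun a ha b hb => ?_⟩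
  have : RI G (Kset (G := G) U u) u b := ri_Kset (.refl hu) hb
  exact ((ri_Kset (.refl hu) ha).symm).append this

/-- a set closed under adjacency within `U` contains the whole component. -/
lemma Kset_subset_closed {U B : Set V} {u : V} (huB : u ∈ B)
    (hcl : ∀ a ∈ B, ∀ w ∈ U, G.Adj a w → w ∈ B) : Kset (G := G) U u ⊆ B := by
  intro w hw
  have : ∀ a b, RI G U a b → a ∈ B → b ∈ B := by
    intro a b h
    induction h with
    | refl _ => exact id
    | @cons a c _ ha hac h ih => intro haB; exact ih (hcl a haB c h.mem_left hac)
  exact this u w hw huB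

lemma not_conn_of_closed {U B : Set V} (hB : B.Nonempty) (hBU : B ⊆ U)
    (hx : ∃ x ∈ U, x ∉ B) (hcl : ∀ a ∈ B, ∀ w ∈ U, G.Adj a w → w ∈ B) : ¬ Conn G U := by
  rintro ⟨-, hU⟩
  obtain ⟨u, hu⟩ := hB
  obtain ⟨x, hxU, hxB⟩ := hx
  have := hU u (hBU hu) x hxU
  exact hxB (Kset_subset_closed hu hcl this)

/-! transfers between `Conn` and `Connected` of induced graphs -/

lemma ri_of_induce_walk {S : Set V} : ∀ {a b : ↥S}, (G.induce S).Walk a b → RI G S (↑a) (↑b) := by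
  intro a b p
  induction p with
  | nil => exact .refl (Subtype.mem _)
  | @cons u v w h p ih => exact .cons (Subtype.mem _) h ih

lemma conn_of_induce_connected {S : Set V} (h : (G.induce S).Connected) : Conn G S := by
  have hne : Nonempty ↥S := h.nonempty
  obtain ⟨a⟩ := hne
  refine ⟨⟨↑a, a.2⟩, fun u hu v hv => ?_⟩
  obtain ⟨p⟩ := h.preconnected ⟨u, hu⟩ ⟨v, hv⟩
  exact ri_of_induce_walk p

lemma induce_reachable_of_ri {S : Set V} {u v : V} (h : RI G S u v) :
    ∀ (hu : u ∈ S) (hv : v ∈ S), (G.induce S).Reachable ⟨u, hu⟩ ⟨v, hv⟩ := by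
  induction h with
  | refl hu => exact fun _ _ => Reachable.refl _
  | @cons u w _ hu ha h ih =>
    intro hu' hv'
    have : (G.induce S).Adj ⟨u, hu'⟩ ⟨w, h.mem_left⟩ := ha
    exact this.reachable.trans (ih h.mem_left hv')

lemma induce_connected_of_conn {S : Set V} (h : Conn G S) : (G.induce S).Connected := by
  obtain ⟨⟨u₀, hu₀⟩, hS⟩ := h
  haveI : Nonempty ↥S := ⟨⟨u₀, hu₀⟩⟩
  refine Connected.mk fun a b => ?_
  have := hS ↑a a.2 ↑b b.2
  have h2 := induce_reachable_of_ri this a.2 b.2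
  simpa using h2

lemma induce2_reachable_of_ri {S A : Set V} (hAS : A ⊆ S) {u v : V} (h : RI G A u v) :
    ∀ (hu : u ∈ A) (hv : v ∈ A),
      ((G.induce S).induce {w : ↥S | ↑w ∈ A}).Reachable
        ⟨⟨u, hAS hu⟩, by exact hu⟩ ⟨⟨v, hAS hv⟩, by exact hv⟩ := by
  induction h with
  | refl hu => exact fun _ _ => Reachable.refl _
  | @cons u w _ hu ha h ih =>
    intro hu' hv'
    have hwA : w ∈ A := h.mem_left
    have : ((G.induce S).induce {w : ↥S | ↑w ∈ A}).Adj
        ⟨⟨u, hAS hu'⟩, by exact hu'⟩ ⟨⟨w, hAS hwA⟩, by exact hwA⟩ := ha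
    exact this.reachable.trans (ih hwA hv')

lemma induce2_connected {S A : Set V} (hAS : A ⊆ S) (h : Conn G A) :
    ((G.induce S).induce {w : ↥S | ↑w ∈ A}).Connected := by
  obtain ⟨⟨u₀, hu₀⟩, hA⟩ := h
  haveI : Nonempty ↥{w : ↥S | ↑w ∈ A} := ⟨⟨⟨u₀, hAS hu₀⟩, by exact hu₀⟩⟩
  refine Connected.mk fun a b => ?_
  obtain ⟨⟨a, haS⟩, haA⟩ := a
  obtain ⟨⟨b, hbS⟩, hbA⟩ := b
  exact induce2_reachable_of_ri hAS (hA a haA b hbA) haA hbA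

/-- Two-connectivity of the set `S` within `G`. -/
def TwoConnOn (G : SimpleGraph V) (S : Set V) : Prop :=
  Conn G S ∧ ∀ c ∈ S, Conn G (S \ {c})

lemma isTwoConnected_induce_of_twoConnOn {S : Set V} (h : TwoConnOn G S) :
    IsTwoConnected (G.induce S) := by
  refine ⟨induce_connected_of_conn h.1, fun c => ?_⟩
  have hset : {u : ↥S | u ≠ c} = {w : ↥S | ↑w ∈ S \ {↑c}} := by
    ext w
    simp only [Set.mem_setOf_eq, Set.mem_diff, Set.mem_singleton_iff]
    constructor
    · intro hw; exact ⟨w.2, fun hc => hw (Subtype.ext hc)⟩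
    · intro hw hc; exact hw.2 (by rw [hc])
  rw [hset]
  exact induce2_connected Set.diff_subset (h.2 ↑c c.2)

lemma conn_univ_of_connected (h : G.Connected) : Conn G Set.univ := by
  obtain ⟨u₀⟩ := h.nonempty
  refine ⟨⟨u₀, trivial⟩, fun u _ v _ => ?_⟩
  obtain ⟨p⟩ := h.preconnected u v
  clear h
  induction p with
  | nil => exact .refl trivial
  | cons h p ih => exact .cons trivial h (ih trivial trivial)

lemma conn_compl_singleton_of_isTwoConnected (h : IsTwoConnected G) (v : V) :
    Conn G (Set.univ \ {v}) := by
  have := conn_of_induce_connected (h.2 v)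
  have hset : {u : V | u ≠ v} = Set.univ \ {v} := by
    ext u; simp [Set.mem_diff]
  rwa [hset] at this

/-! ### Contraction quotients -/

lemma contractEdges_adj {F : Set (Sym2 V)} {c d : (SimpleGraph.fromEdgeSet F).ConnectedComponent} :
    (contractEdges G F).Adj c d ↔ c ≠ d ∧ ∃ u v : V, G.Adj u v ∧
      (SimpleGraph.fromEdgeSet F).connectedComponentMk u = c ∧
      (SimpleGraph.fromEdgeSet F).connectedComponentMk v = d := by
  constructor
  · rintro h
    rw [contractEdges, SimpleGraph.fromRel_adj] at h
    obtain ⟨hne, h | h⟩ := h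
    · exact ⟨hne, h⟩
    · obtain ⟨u, v, huv, hu, hv⟩ := h
      exact ⟨hne, v, u, huv.symm, hv, hu⟩
  · rintro ⟨hne, h⟩
    rw [contractEdges, SimpleGraph.fromRel_adj]
    exact ⟨hne, Or.inl h⟩

section QuotS

variable (G) (S : Set V)

local notation "FS" => SimpleGraph.fromEdgeSet (edgesIn G S)
local notation "ccS" => SimpleGraph.connectedComponentMk (SimpleGraph.fromEdgeSet (edgesIn G S))

lemma fromEdgeSet_edgesIn_adj {u v : V} : (FS).Adj u v ↔ G.Adj u v ∧ u ∈ S ∧ v ∈ S := by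
  rw [SimpleGraph.fromEdgeSet_adj]
  constructor
  · rintro ⟨⟨he, hm⟩, hne⟩
    exact ⟨(G.mem_edgeSet).1 he, hm u (by simp), hm v (by simp)⟩
  · rintro ⟨ha, hu, hv⟩
    refine ⟨⟨(G.mem_edgeSet).2 ha, ?_⟩, ha.ne⟩
    intro w hw
    rcases Sym2.mem_iff.1 hw with rfl | rfl
    · exact hu
    · exact hv

variable {G S}

lemma ccS_eq_of_ri {u v : V} (h : RI G S u v) : ccS u = ccS v := by
  induction h with
  | refl _ => rfl
  | @cons u w _ hu ha h ih =>
    have : (FS).Adj u w := (fromEdgeSet_edgesIn_adj G S).2 ⟨ha, hu, h.mem_left⟩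
    exact (SimpleGraph.ConnectedComponent.eq.2 this.reachable).trans ih

lemma eq_of_ccS_eq {u w : V} (hu : u ∉ S) (h : ccS u = ccS w) : u = w := by
  obtain ⟨p⟩ := SimpleGraph.ConnectedComponent.eq.1 h
  cases p with
  | nil => rfl
  | cons ha _ =>
    exact absurd ((fromEdgeSet_edgesIn_adj G S).1 ha).2.1 hu

lemma reach_quot {u v : V} (h : G.Reachable u v) :
    (contractEdges G (edgesIn G S)).Reachable (ccS u) (ccS v) := by
  obtain ⟨p⟩ := h
  induction p with
  | nil => exact Reachable.refl _
  | @cons a b _ ha _ ih =>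
    by_cases hcc : ccS a = ccS b
    · rw [hcc]; exact ih
    · refine (Reachable.trans ?_ ih)
      exact (SimpleGraph.Adj.reachable (contractEdges_adj.2 ⟨hcc, a, b, ha, rfl, rfl⟩))

lemma reach_quot_induce {κ : (FS).ConnectedComponent} {A : Set V}
    (hA : ∀ a ∈ A, ccS a ≠ κ) {u v : V} (h : RI G A u v) :
    ((contractEdges G (edgesIn G S)).induce {q | q ≠ κ}).Reachable
      ⟨ccS u, hA u h.mem_left⟩ ⟨ccS v, hA v h.mem_right⟩ := by
  induction h with
  | refl _ => exact Reachable.refl _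
  | @cons a b _ ha hab h ih =>
    by_cases hcc : ccS a = ccS b
    · have : (⟨ccS a, hA a ha⟩ : {q : (FS).ConnectedComponent | q ≠ κ}) =
        ⟨ccS b, hA b h.mem_left⟩ := Subtype.ext hcc
      rw [this]; exact ih
    · refine Reachable.trans ?_ ih
      have : ((contractEdges G (edgesIn G S)).induce {q | q ≠ κ}).Adj
          ⟨ccS a, hA a ha⟩ ⟨ccS b, hA b h.mem_left⟩ :=
        contractEdges_adj.2 ⟨hcc, a, b, hab, rfl, rfl⟩
      exact this.reachable

lemma isTwoConnected_contract (hG : G.Connected) (h2 : ∀ v : V, Conn G (Set.univ \ {v}))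
    (hS : Conn G S) (hcomp : Conn G (Set.univ \ S)) :
    IsTwoConnected (contractEdges G (edgesIn G S)) := by
  obtain ⟨x₀, hx₀⟩ := hS.1
  have bl : ∀ u ∈ S, ccS u = ccS x₀ := fun u hu => ccS_eq_of_ri (hS.2 u hu x₀ hx₀)
  have nb : ∀ u, u ∉ S → ccS u ≠ ccS x₀ := by
    intro u hu h
    exact hu (eq_of_ccS_eq hu h ▸ hx₀)
  constructor
  · haveI : Nonempty ((FS).ConnectedComponent) := ⟨ccS x₀⟩
    refine Connected.mk fun c d => ?_
    obtain ⟨u, rfl⟩ := c.exists_rep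
    obtain ⟨v, rfl⟩ := d.exists_rep
    exact reach_quot (hG.preconnected u v)
  · intro κ
    obtain ⟨w₀, hw₀⟩ := κ.exists_rep
    by_cases hw₀S : w₀ ∈ S
    · have hκ : κ = ccS x₀ := hw₀ ▸ bl w₀ hw₀S
      subst hκ
      obtain ⟨v₁, hv₁⟩ := hcomp.1
      have hv₁' : ccS v₁ ≠ ccS x₀ := nb v₁ (fun h => hv₁.2 h)
      haveI : Nonempty ↥{q : (FS).ConnectedComponent | q ≠ ccS x₀} := ⟨⟨ccS v₁, hv₁'⟩⟩
      refine Connected.mk fun a b => ?_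
      obtain ⟨c, hc⟩ := a
      obtain ⟨d, hd⟩ := b
      obtain ⟨u, rfl⟩ := c.exists_rep
      obtain ⟨v, rfl⟩ := d.exists_rep
      have huS : u ∉ S := fun h => hc (bl u h)
      have hvS : v ∉ S := fun h => hd (bl v h)
      have hri := hcomp.2 u ⟨trivial, huS⟩ v ⟨trivial, hvS⟩
      have hA : ∀ a ∈ Set.univ \ S, ccS a ≠ ccS x₀ := fun a ha => nb a ha.2
      exact reach_quot_induce hA hri
    · have hκ : κ = ccS w₀ := hw₀.symm
      subst hκ
      have hbl : ccS x₀ ≠ ccS w₀ := fun h => hw₀S (eq_of_ccS_eq hw₀S h.symm ▸ hx₀)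
      haveI : Nonempty ↥{q : (FS).ConnectedComponent | q ≠ ccS w₀} := ⟨⟨ccS x₀, hbl⟩⟩
      have hA : ∀ a ∈ Set.univ \ {w₀}, ccS a ≠ ccS w₀ := by
        intro a ha h
        by_cases haS : a ∈ S
        · exact hbl ((bl a haS).symm.trans h)
        · exact ha.2 (eq_of_ccS_eq haS h)
      have key : ∀ c : ↥{q : (FS).ConnectedComponent | q ≠ ccS w₀},
          ((contractEdges G (edgesIn G S)).induce
            {q | q ≠ ccS w₀}).Reachable c ⟨ccS x₀, hbl⟩ := by
        rintro ⟨c, hc⟩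
        obtain ⟨u, rfl⟩ := c.exists_rep
        have huw : u ≠ w₀ := fun h => hc (h ▸ rfl)
        have hri := (h2 w₀).2 u ⟨trivial, huw⟩ x₀ ⟨trivial, fun h => hw₀S (h ▸ hx₀)⟩
        exact reach_quot_induce hA hri
      refine Connected.mk fun a b => ?_
      exact (key a).trans (key b).symm

end QuotS

section QuotE

variable {x y : V}

local notation "FE" => SimpleGraph.fromEdgeSet {Sym2.mk x y}
local notation "ccE" => SimpleGraph.connectedComponentMk (SimpleGraph.fromEdgeSet {Sym2.mk x y})

lemma ccE_xy (hxy : x ≠ y) : ccE x = ccE y := by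
  refine SimpleGraph.ConnectedComponent.eq.2 ?_
  exact SimpleGraph.Adj.reachable ((SimpleGraph.fromEdgeSet_adj _).2 ⟨rfl, hxy⟩)

lemma eq_of_ccE_eq {u w : V} (hu : u ∉ ({x, y} : Set V)) (h : ccE u = ccE w) : u = w := by
  obtain ⟨p⟩ := SimpleGraph.ConnectedComponent.eq.1 h
  cases p with
  | nil => rfl
  | @cons _ t _ ha _ =>
    obtain ⟨he, -⟩ := (SimpleGraph.fromEdgeSet_adj _).1 ha
    rw [Set.mem_singleton_iff, Sym2.eq_iff] at he
    rcases he with ⟨rfl, rfl⟩ | ⟨rfl, rfl⟩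
    · exact absurd (Set.mem_insert _ _) hu
    · exact absurd (Set.mem_insert_of_mem _ rfl) hu

lemma conn_compl_pair_of_contract (hxy : G.Adj x y)
    (h : IsTwoConnected (contractEdges G {Sym2.mk x y}))
    (hne : (Set.univ \ {x, y} : Set V).Nonempty) : Conn G (Set.univ \ ({x, y} : Set V)) := by
  have hmem : ∀ u : V, u ∉ ({x, y} : Set V) → ccE u ≠ ccE x := by
    intro u hu hc
    exact hu (eq_of_ccE_eq hu hc ▸ Set.mem_insert _ _)
  have hcon := h.2 (ccE x)
  refine ⟨hne, fun a ha b hb => ?_⟩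
  obtain ⟨p⟩ := hcon.preconnected ⟨ccE a, hmem a ha.2⟩ ⟨ccE b, hmem b hb.2⟩
  have key : ∀ (n₁ n₂ : ↥{q : (FE).ConnectedComponent | q ≠ ccE x})
      (p : ((contractEdges G {Sym2.mk x y}).induce {q | q ≠ ccE x}).Walk n₁ n₂)
      (a : V), a ∉ ({x, y} : Set V) → ccE a = ↑n₁ →
      ∀ b : V, b ∉ ({x, y} : Set V) → ccE b = ↑n₂ → RI G (Set.univ \ ({x, y} : Set V)) a b := by
    intro n₁ n₂ p
    induction p with
    | nil =>
      intro a ha h₁ b hb h₂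
      have := eq_of_ccE_eq ha (h₁.trans h₂.symm)
      exact this ▸ RI.refl ⟨trivial, ha⟩
    | @cons m₁ m₂ _ hadj _ ih =>
      intro a ha h₁ b hb h₂
      have hadj' := contractEdges_adj.1 hadj
      obtain ⟨hne', u, v, huv, hu, hv⟩ := hadj'
      have hum : u ∉ ({x, y} : Set V) := by
        intro huxy
        have : ccE u = ccE x := by
          rcases huxy with rfl | h'
          · rfl
          · rw [Set.mem_singleton_iff] at h'; subst h'; exact (ccE_xy hxy.ne).symm
        exact m₁.2 ((hu.symm.trans this : _ = _))
      have hvm : v ∉ ({x, y} : Set V) := by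
        intro hvxy
        have : ccE v = ccE x := by
          rcases hvxy with rfl | h'
          · rfl
          · rw [Set.mem_singleton_iff] at h'; subst h'; exact (ccE_xy hxy.ne).symm
        exact m₂.2 ((hv.symm.trans this : _ = _))
      have hau : a = u := eq_of_ccE_eq ha (h₁.trans hu.symm)
      subst hau
      exact RI.cons ⟨trivial, ha⟩ huv (ih v hvm hv b hb h₂)
  exact key _ _ p a ha.2 rfl b hb.2 rfl

end QuotE

/-! ### Counting -/

section Count

variable [Fintype V]

lemma image_edgeSet_induce (S : Set V) :
    Sym2.map (Subtype.val : ↥S → V) '' (G.induce S).edgeSet = edgesIn G S := by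
  ext e
  constructor
  · rintro ⟨e', he', rfl⟩
    induction e' using Sym2.ind with
    | _ a b =>
      rw [SimpleGraph.mem_edgeSet] at he'
      have hab : G.Adj ↑a ↑b := he'
      rw [Sym2.map_pair_eq]
      refine ⟨(G.mem_edgeSet).2 hab, ?_⟩
      intro v hv
      rcases Sym2.mem_iff.1 hv with rfl | rfl
      · exact a.2
      · exact b.2
  · rintro ⟨he, hm⟩
    induction e using Sym2.ind with
    | _ a b =>
      have hab : G.Adj a b := (G.mem_edgeSet).1 he
      have ha : a ∈ S := hm a (by simp)
      have hb : b ∈ S := hm b (by simp)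
      refine ⟨Sym2.mk ⟨a, ha⟩ ⟨b, hb⟩, ?_, by rw [Sym2.map_pair_eq]⟩
      exact (SimpleGraph.mem_edgeSet _).2 hab

lemma ncard_edgeSet_induce (S : Set V) :
    (G.induce S).edgeSet.ncard = (edgesIn G S).ncard := by
  rw [← image_edgeSet_induce (G := G) S,
    Set.ncard_image_of_injective _ (Sym2.map.injective Subtype.val_injective)]

lemma sum_nbrs_eq (H : SimpleGraph V) :
    ∑ v : V, (H.neighborSet v).ncard = 2 * H.edgeSet.ncard := by
  classical
  have h := H.sum_degrees_eq_twice_card_edges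
  have h1 : ∀ v, (H.neighborSet v).ncard = H.degree v := by
    intro v
    rw [← SimpleGraph.card_neighborSet_eq_degree, ← Nat.card_coe_set_eq,
      Nat.card_eq_fintype_card]
  have h2 : H.edgeSet.ncard = H.edgeFinset.card := by
    rw [← SimpleGraph.coe_edgeFinset, Set.ncard_coe_finset]
  rw [h2]
  rw [← h]
  exact Finset.sum_congr rfl fun v _ => h1 v

lemma ncard_nbr_induce {S : Set V} {b : V} (hb : b ∈ S) (hnb : G.neighborSet b ⊆ S) :
    ((G.induce S).neighborSet ⟨b, hb⟩).ncard = (G.neighborSet b).ncard := by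
  have himg : (Subtype.val : ↥S → V) '' ((G.induce S).neighborSet ⟨b, hb⟩)
      = G.neighborSet b := by
    ext w
    constructor
    · rintro ⟨w', hw', rfl⟩
      exact hw'
    · intro hw
      exact ⟨⟨w, hnb hw⟩, hw, rfl⟩
  rw [← himg, Set.ncard_image_of_injective _ Subtype.val_injective]

lemma ncard_nbr_induce_le {S D : Set V} {b : V} (hb : b ∈ S)
    (hnb : ∀ w ∈ S, G.Adj b w → w ∈ D) :
    ((G.induce S).neighborSet ⟨b, hb⟩).ncard ≤ D.ncard := by
  have himg : (Subtype.val : ↥S → V) '' ((G.induce S).neighborSet ⟨b, hb⟩) ⊆ D := by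
    rintro w ⟨w', hw', rfl⟩
    exact hnb _ w'.2 hw'
  calc ((G.induce S).neighborSet ⟨b, hb⟩).ncard
      = ((Subtype.val : ↥S → V) '' ((G.induce S).neighborSet ⟨b, hb⟩)).ncard :=
        (Set.ncard_image_of_injective _ Subtype.val_injective).symm
    _ ≤ D.ncard := Set.ncard_le_ncard himg (Set.toFinite D)

lemma edgesIn_compl_singleton (b : V) :
    edgesIn G (Set.univ \ {b}) = G.edgeSet \ G.incidenceSet b := by
  ext e
  induction e using Sym2.ind with
  | _ u v =>
    simp only [edgesIn, Set.mem_setOf_eq, Set.mem_diff, SimpleGraph.incidenceSet,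
      Set.mem_singleton_iff]
    constructor
    · rintro ⟨he, hm⟩
      exact ⟨he, fun h => (hm b h.2).2 rfl⟩
    · rintro ⟨he, hnb⟩
      refine ⟨he, ?_⟩
      intro w hw
      refine ⟨trivial, ?_⟩
      rintro rfl
      exact hnb ⟨he, hw⟩

lemma ncard_incidence (b : V) : (G.incidenceSet b).ncard = (G.neighborSet b).ncard := by
  classical
  rw [← Nat.card_coe_set_eq, ← Nat.card_coe_set_eq]
  exact Nat.card_congr (G.incidenceSetEquivNeighborSet b)

lemma edge_count_split (b : V) :
    G.edgeSet.ncard = (edgesIn G (Set.univ \ {b})).ncard + (G.neighborSet b).ncard := by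
  rw [edgesIn_compl_singleton, ← ncard_incidence (G := G) b]
  exact (Set.ncard_diff_add_ncard_of_subset (G.incidenceSet_subset b) (Set.toFinite _)).symm

end Count

/-! ### Minimum degree -/

section MinDeg

variable [Fintype V]

lemma exists_third (h : 3 ≤ Nat.card V) (u v : V) : ∃ w : V, w ≠ u ∧ w ≠ v := by
  by_contra hc
  push_neg at hc
  have hsub : (Set.univ : Set V) ⊆ {u, v} := by
    intro w _
    rcases Classical.em (w = u) with rfl | hw
    · exact Set.mem_insert _ _
    · exact Set.mem_insert_of_mem _ (hc w hw)
  have := Set.ncard_le_ncard hsub (Set.toFinite _)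
  rw [Set.ncard_univ] at this
  have h2 : ({u, v} : Set V).ncard ≤ 2 := by
    refine le_trans (Set.ncard_insert_le _ _) ?_
    simp [Set.ncard_singleton]
  omega

/-- No vertex has its neighbourhood inside a pair. -/
lemma min_degree_three (h2c : IsTwoConnected G)
    (hdel : ∀ e ∈ G.edgeSet, IsTwoConnected (G.deleteEdges {e}))
    (hc : 4 ≤ Nat.card V) (z a b : V) (hza : z ≠ a) (hzb : z ≠ b)
    (hsub : G.neighborSet z ⊆ ({a, b} : Set V)) : False := by
  -- helper: given a graph H ≤ G with no H-edges at `z` inside `{u | u ≠ c}`, contradiction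
  have key : ∀ (H : SimpleGraph V) (c : V), z ≠ c →
      (H.induce {u : V | u ≠ c}).Connected →
      (∀ v : V, v ≠ c → ¬ H.Adj z v) → False := by
    intro H c hzc hconn hno
    obtain ⟨w, hwz, hwc⟩ := exists_third (by omega) z c
    obtain ⟨p⟩ := hconn.preconnected ⟨z, hzc⟩ ⟨w, hwc⟩
    cases p with
    | nil => exact hwz rfl
    | @cons _ m _ hadj _ =>
      exact hno ↑m m.2 hadj
  by_cases hA : G.Adj z a
  · have he : Sym2.mk z a ∈ G.edgeSet := (G.mem_edgeSet).2 hA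
    refine key (G.deleteEdges {Sym2.mk z a}) b hzb ((hdel _ he).2 b) ?_
    intro v hvb hadj
    rw [SimpleGraph.deleteEdges_adj] at hadj
    have hv : v ∈ ({a, b} : Set V) := hsub hadj.1
    rcases hv with rfl | hv
    · exact hadj.2 rfl
    · rw [Set.mem_singleton_iff] at hv
      exact hvb hv
  · by_cases hB : G.Adj z b
    · have he : Sym2.mk z b ∈ G.edgeSet := (G.mem_edgeSet).2 hB
      refine key (G.deleteEdges {Sym2.mk z b}) a hza ((hdel _ he).2 a) ?_
      intro v hva hadj
      rw [SimpleGraph.deleteEdges_adj] at hadj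
      have hv : v ∈ ({a, b} : Set V) := hsub hadj.1
      rcases hv with rfl | hv
      · exact hva rfl
      · rw [Set.mem_singleton_iff] at hv
        subst hv
        exact hadj.2 rfl
    · -- z has no neighbours at all; use 2-connectivity at some other vertex
      obtain ⟨w, hwz, hwa⟩ := exists_third (by omega) z a
      refine key G w (fun h => hwz h.symm) (h2c.2 w) ?_
      intro v _ hadj
      rcases hsub hadj with rfl | hv
      · exact hA hadj
      · rw [Set.mem_singleton_iff] at hv
        subst hv
        exact hB hadj

end MinDeg

/-! ### More connectivity helpers -/

lemma conn_insert {A : Set V} {z : V} (hA : Conn G A) (hz : ∃ w ∈ A, G.Adj z w) :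
    Conn G (insert z A) := by
  obtain ⟨w₀, hw₀, hadj⟩ := hz
  have hzw : RI G (insert z A) z w₀ :=
    RI.single (Set.mem_insert _ _) (Set.mem_insert_of_mem _ hw₀) hadj
  have hsub : A ⊆ insert z A := Set.subset_insert _ _
  refine ⟨⟨z, Set.mem_insert _ _⟩, fun u hu v hv => ?_⟩
  rcases hu with rfl | hu <;> rcases hv with rfl | hv
  · exact .refl (Set.mem_insert _ _)
  · exact hzw.append ((hA.2 w₀ hw₀ v hv).mono hsub)
  · exact ((hA.2 u hu w₀ hw₀).mono hsub).append hzw.symm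
  · exact (hA.2 u hu v hv).mono hsub

lemma conn_of_parts {U' W : Set V} (hW : Conn G W) (hWU : W ⊆ U')
    (hmeet : ∀ w ∈ U', (Kset (G := G) U' w ∩ W).Nonempty) : Conn G U' := by
  obtain ⟨w₀, hw₀⟩ := hW.1
  refine ⟨⟨w₀, hWU hw₀⟩, fun u hu v hv => ?_⟩
  obtain ⟨ru, hru, hruW⟩ := hmeet u hu
  obtain ⟨rv, hrv, hrvW⟩ := hmeet v hv
  have h1 : RI G U' u ru := hru
  have h2 : RI G U' v rv := hrv
  have h3 : RI G U' ru rv := (hW.2 ru hruW rv hrvW).mono hWU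
  exact h1.append (h3.append h2.symm)

/-! ### Flat equations -/

section Flats

variable [Fintype V] {δ : ℕ}

/-- The good-flat equation, packaged. -/
lemma flat_eq (h1 : IsTwoConnected G)
    (h5 : ∀ S : Set V, IsGoodFlat G S → 2 < S.ncard →
      (edgesIn G S).ncard + 1 = δ * (S.ncard - 1))
    {S : Set V} (hS : TwoConnOn G S) (hcomp : Conn G (Set.univ \ S)) (hc : 2 < S.ncard) :
    (edgesIn G S).ncard + 1 = δ * (S.ncard - 1) :=
  h5 S ⟨isTwoConnected_induce_of_twoConnOn hS,
    isTwoConnected_contract h1.1 (conn_compl_singleton_of_isTwoConnected h1) hS.1 hcomp⟩ hc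

/-- Any vertex whose removal leaves a 2-connected graph has degree `δ + 1`. -/
lemma degree_of_removable (h1 : IsTwoConnected G)
    (h4 : G.edgeSet.ncard = δ * (Nat.card V - 1))
    (h5 : ∀ S : Set V, IsGoodFlat G S → 2 < S.ncard →
      (edgesIn G S).ncard + 1 = δ * (S.ncard - 1))
    (hn4 : 4 ≤ Nat.card V) {b : V}
    (hb : ∀ c ∈ Set.univ \ {b}, Conn G ((Set.univ \ {b}) \ {c})) :
    (G.neighborSet b).ncard = δ + 1 := by
  have hTC : TwoConnOn G (Set.univ \ {b}) :=
    ⟨conn_compl_singleton_of_isTwoConnected h1 b, hb⟩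
  have hcompset : Set.univ \ (Set.univ \ {b}) = {b} :=
    Set.diff_diff_cancel_left (Set.subset_univ _)
  have hcomp : Conn G (Set.univ \ (Set.univ \ {b})) := by
    rw [hcompset]
    exact ⟨⟨b, rfl⟩, by rintro u rfl v rfl; exact .refl rfl⟩
  have hncard : (Set.univ \ {b} : Set V).ncard = Nat.card V - 1 := by
    rw [Set.ncard_diff_singleton_of_mem (Set.mem_univ b), Set.ncard_univ]
  have heq := flat_eq h1 h5 hTC hcomp (by omega : 2 < (Set.univ \ {b} : Set V).ncard)
  rw [hncard] at heq
  have hsplit := edge_count_split (G := G) b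
  have hm2 : Nat.card V - 1 - 1 = Nat.card V - 2 := by omega
  rw [hm2] at heq
  have hmul : δ * (Nat.card V - 1) = δ * (Nat.card V - 2) + δ := by
    have h' : Nat.card V - 1 = (Nat.card V - 2) + 1 := by omega
    rw [h', Nat.mul_succ]
  omega

/-- Degree-sum bound over `H = D ∪ {x, y}`. -/
lemma degree_sum_bound (hxy : x ≠ y) {D : Set V} (hxD : x ∉ D) (hyD : y ∉ D)
    (hnbD : ∀ b ∈ D, G.neighborSet b ⊆ insert x (insert y D))
    (hdeg : ∀ b ∈ D, (G.neighborSet b).ncard = δ + 1) (hxA : ¬ G.Adj x y) :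
    2 * (edgesIn G (insert x (insert y D))).ncard ≤ D.ncard * (δ + 1) + 2 * D.ncard := by
  classical
  set H : Set V := insert x (insert y D) with hH
  have hxH : x ∈ H := Set.mem_insert _ _
  have hyH : y ∈ H := Set.mem_insert_of_mem _ (Set.mem_insert _ _)
  have hsum := sum_nbrs_eq (G.induce H)
  rw [ncard_edgeSet_induce] at hsum
  rw [← hsum]
  have hsplit := Finset.sum_filter_add_sum_filter_not (Finset.univ : Finset ↥H)
    (fun v => (v : V) ∈ D) (fun v => ((G.induce H).neighborSet v).ncard)
  rw [← hsplit]
  have hD : ∀ v ∈ Finset.univ.filter (fun v : ↥H => (v : V) ∈ D),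
      ((G.induce H).neighborSet v).ncard = δ + 1 := by
    rintro ⟨v, hvH⟩ hv
    rw [Finset.mem_filter] at hv
    have hvD : v ∈ D := hv.2
    rw [ncard_nbr_induce hvH (hnbD v hvD)]
    exact hdeg v hvD
  have hcard : (Finset.univ.filter (fun v : ↥H => (v : V) ∈ D)).card = D.ncard := by
    rw [Set.ncard_eq_toFinset_card']
    refine Finset.card_bij (fun v _ => (v : V)) ?_ ?_ ?_
    · rintro ⟨v, hvH⟩ hv
      rw [Finset.mem_filter] at hv
      simpa using hv.2
    · intro a₁ ha₁ a₂ ha₂ h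
      exact Subtype.ext h
    · intro b hb
      rw [Set.mem_toFinset] at hb
      exact ⟨⟨b, Set.mem_insert_of_mem _ (Set.mem_insert_of_mem _ hb)⟩,
        Finset.mem_filter.2 ⟨Finset.mem_univ _, hb⟩, rfl⟩
  have hDsum : ∑ v ∈ Finset.univ.filter (fun v : ↥H => (v : V) ∈ D),
      ((G.induce H).neighborSet v).ncard = D.ncard * (δ + 1) := by
    rw [Finset.sum_congr rfl hD, Finset.sum_const, smul_eq_mul, hcard]
  have hxynotD : Finset.univ.filter (fun v : ↥H => ¬ (v : V) ∈ D) =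
      {(⟨x, hxH⟩ : ↥H), ⟨y, hyH⟩} := by
    ext v
    simp only [Finset.mem_filter, Finset.mem_univ, true_and, Finset.mem_insert,
      Finset.mem_singleton]
    constructor
    · intro hv
      rcases Set.mem_insert_iff.1 v.2 with h | h'
      · exact Or.inl (Subtype.ext h)
      rcases Set.mem_insert_iff.1 h' with h | h''
      · exact Or.inr (Subtype.ext h)
      · exact absurd h'' hv
    · rintro (rfl | rfl)
      · exact hxD
      · exact hyD
  have hne' : (⟨x, hxH⟩ : ↥H) ≠ ⟨y, hyH⟩ := fun h => hxy (Subtype.ext_iff.1 h)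
  have hxbound : ((G.induce H).neighborSet ⟨x, hxH⟩).ncard ≤ D.ncard := by
    refine ncard_nbr_induce_le hxH ?_
    intro w hwH hadj
    rcases hwH with rfl | hwH
    · exact absurd hadj (G.irrefl)
    rcases hwH with rfl | hwH
    · exact absurd hadj hxA
    · exact hwH
  have hybound : ((G.induce H).neighborSet ⟨y, hyH⟩).ncard ≤ D.ncard := by
    refine ncard_nbr_induce_le hyH ?_
    intro w hwH hadj
    rcases hwH with rfl | hwH
    · exact absurd hadj.symm hxA
    rcases hwH with rfl | hwH
    · exact absurd hadj (G.irrefl)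
    · exact hwH
  rw [hxynotD, Finset.sum_pair hne', hDsum]
  omega

end Flats

/-! ### Fragments of 2-cuts -/

/-- A connected component of the complement of a non-adjacent cut pair. -/
def IsFragment (G : SimpleGraph V) (D' : Set V) : Prop :=
  ∃ a b : V, a ≠ b ∧ ¬ Conn G (Set.univ \ {a, b}) ∧
    ∃ u ∈ Set.univ \ ({a, b} : Set V), D' = Kset (G := G) (Set.univ \ {a, b}) u

section Fragments

variable [Fintype V] {D : Set V}

lemma frag_lt (hmin : ∀ D' : Set V, IsFragment G D' → D.ncard ≤ D'.ncard)
    {B : Set V} {a b : V} (hab : a ≠ b)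
    (hBcl : ∀ p ∈ B, ∀ w ∈ Set.univ \ ({a, b} : Set V), G.Adj p w → w ∈ B)
    (hBsub : B ⊆ Set.univ \ ({a, b} : Set V)) (hBne : B.Nonempty)
    (hout : ∃ t ∈ Set.univ \ ({a, b} : Set V), t ∉ B)
    (hsmall : B.ncard < D.ncard) : False := by
  obtain ⟨q, hq⟩ := hBne
  have hnc : ¬ Conn G (Set.univ \ ({a, b} : Set V)) :=
    not_conn_of_closed ⟨q, hq⟩ hBsub hout hBcl
  have hK : Kset (G := G) (Set.univ \ ({a, b} : Set V)) q ⊆ B :=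
    Kset_subset_closed hq hBcl
  have hfrag : IsFragment G (Kset (G := G) (Set.univ \ ({a, b} : Set V)) q) :=
    ⟨a, b, hab, hnc, q, hBsub hq, rfl⟩
  have := hmin _ hfrag
  have := Set.ncard_le_ncard hK (Set.toFinite B)
  omega

lemma attach_one (h1 : IsTwoConnected G) {x y : V} (hxy : x ≠ y) {B : Set V}
    (hBne : B.Nonempty) (hBU : B ⊆ Set.univ \ ({x, y} : Set V))
    (hBcl : ∀ a ∈ B, ∀ w ∈ Set.univ \ ({x, y} : Set V), G.Adj a w → w ∈ B) :
    ∃ z ∈ B, G.Adj x z := by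
  have h2c := conn_compl_singleton_of_isTwoConnected h1
  by_contra hno
  push_neg at hno
  refine not_conn_of_closed (G := G) hBne ?_ ?_ ?_ (h2c y)
  · intro a ha
    exact ⟨trivial, fun h => (hBU ha).2 (by rw [Set.mem_singleton_iff] at h; exact h ▸ Set.mem_insert_of_mem _ rfl)⟩
  · refine ⟨x, ⟨trivial, fun h => hxy (Set.mem_singleton_iff.1 h)⟩, fun hxB => ?_⟩
    exact (hBU hxB).2 (Set.mem_insert _ _)
  · intro a ha w hw hadj
    by_cases hwU : w ∈ Set.univ \ ({x, y} : Set V)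
    · exact hBcl a ha w hwU hadj
    · have hwxy : w ∈ ({x, y} : Set V) := by
        by_contra hc
        exact hwU ⟨trivial, hc⟩
      rcases hwxy with rfl | hw'
      · exact absurd hadj.symm (hno a ha)
      · rw [Set.mem_singleton_iff] at hw'
        exact absurd hw' hw.2

lemma attach_pair (h1 : IsTwoConnected G) {x y : V} (hxy : x ≠ y) {B : Set V}
    (hBne : B.Nonempty) (hBU : B ⊆ Set.univ \ ({x, y} : Set V))
    (hBcl : ∀ a ∈ B, ∀ w ∈ Set.univ \ ({x, y} : Set V), G.Adj a w → w ∈ B) :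
    (∃ z ∈ B, G.Adj x z) ∧ (∃ z ∈ B, G.Adj y z) := by
  refine ⟨attach_one h1 hxy hBne hBU hBcl, ?_⟩
  rw [Set.pair_comm x y] at hBU hBcl
  exact attach_one h1 hxy.symm hBne hBU hBcl

/-- Key lemma: `D ∪ {x, y}` induces a 2-connected subgraph when `D` is a minimum fragment. -/
lemma twoConnOn_insert_pair (h1 : IsTwoConnected G)
    (hdel : ∀ e ∈ G.edgeSet, IsTwoConnected (G.deleteEdges {e}))
    (hn4 : 4 ≤ Nat.card V) {x y : V} (hxy : x ≠ y)
    (hDsub : D ⊆ Set.univ \ ({x, y} : Set V)) (hDne : D.Nonempty) (hDconn : Conn G D)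
    (hDcl : ∀ a ∈ D, ∀ w ∈ Set.univ \ ({x, y} : Set V), G.Adj a w → w ∈ D)
    (hmin : ∀ D' : Set V, IsFragment G D' → D.ncard ≤ D'.ncard) :
    TwoConnOn G (insert x (insert y D)) := by
  have h2c := conn_compl_singleton_of_isTwoConnected h1
  have hxD : x ∉ D := fun h => (hDsub h).2 (Set.mem_insert _ _)
  have hyD : y ∉ D := fun h => (hDsub h).2 (Set.mem_insert_of_mem _ rfl)
  obtain ⟨⟨zx, hzx, hzxA⟩, ⟨zy, hzy, hzyA⟩⟩ := attach_pair h1 hxy hDne hDsub hDcl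
  have hnbD : ∀ b ∈ D, ∀ w : V, G.Adj b w → w ∈ insert x (insert y D) := by
    intro b hb w hadj
    by_cases hwU : w ∈ Set.univ \ ({x, y} : Set V)
    · exact Set.mem_insert_of_mem _ (Set.mem_insert_of_mem _ (hDcl b hb w hwU hadj))
    · have : w ∈ ({x, y} : Set V) := by
        by_contra hc; exact hwU ⟨trivial, hc⟩
      rcases this with rfl | hw'
      · exact Set.mem_insert _ _
      · rw [Set.mem_singleton_iff] at hw'
        exact hw' ▸ Set.mem_insert_of_mem _ (Set.mem_insert _ _)
  have hyDconn : Conn G (insert y D) := conn_insert hDconn ⟨zy, hzy, hzyA⟩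
  have hxDconn : Conn G (insert x D) := conn_insert hDconn ⟨zx, hzx, hzxA⟩
  have hHconn : Conn G (insert x (insert y D)) :=
    conn_insert hyDconn ⟨zx, Set.mem_insert_of_mem _ hzx, hzxA⟩
  refine ⟨hHconn, fun c hc => ?_⟩
  rcases Set.mem_insert_iff.1 hc with rfl | hc'
  · rw [Set.insert_diff_self_of_notMem (by
      intro h
      rcases Set.mem_insert_iff.1 h with h' | h'
      · exact hxy h'
      · exact hxD h')]
    exact hyDconn
  rcases Set.mem_insert_iff.1 hc' with rfl | hzD
  · have hset : (insert x (insert c D)) \ {c} = insert x D := by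
      ext u
      simp only [Set.mem_diff, Set.mem_insert_iff, Set.mem_singleton_iff]
      constructor
      · rintro ⟨h | h | h, hne⟩
        · exact Or.inl h
        · exact absurd h hne
        · exact Or.inr h
      · rintro (rfl | h)
        · exact ⟨Or.inl rfl, hxy⟩
        · exact ⟨Or.inr (Or.inr h), fun hc => hyD (hc ▸ h)⟩
    rw [hset]
    exact hxDconn
  · -- removing z ∈ D
    set z := c with hzdef
    have hxz : x ≠ z := fun h => hxD (h ▸ hzD)
    have hyz : y ≠ z := fun h => hyD (h ▸ hzD)
    by_contra hnc2
    set Hz : Set V := (insert x (insert y D)) \ {z} with hHz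
    have hxHz : x ∈ Hz := ⟨Set.mem_insert _ _, fun h => hxz (Set.mem_singleton_iff.1 h)⟩
    have hyHz : y ∈ Hz := ⟨Set.mem_insert_of_mem _ (Set.mem_insert _ _),
      fun h => hyz (Set.mem_singleton_iff.1 h)⟩
    have hDzHz : D \ {z} ⊆ Hz := fun a ha =>
      ⟨Set.mem_insert_of_mem _ (Set.mem_insert_of_mem _ ha.1), ha.2⟩
    have hHzmem : ∀ u ∈ Hz, u = x ∨ u = y ∨ u ∈ D \ {z} := by
      rintro u ⟨hu, hne⟩
      rcases Set.mem_insert_iff.1 hu with h | h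
      · exact Or.inl h
      rcases Set.mem_insert_iff.1 h with h' | h'
      · exact Or.inr (Or.inl h')
      · exact Or.inr (Or.inr ⟨h', hne⟩)
    have step1 : ∀ w ∈ D \ {z}, RI G Hz w x ∨ RI G Hz w y := by
      intro w hw
      have hri : RI G (Set.univ \ {z}) w x :=
        (h2c z).2 w ⟨trivial, hw.2⟩ x ⟨trivial, fun h => hxz (Set.mem_singleton_iff.1 h)⟩
      have htr := ri_trunc (C := ({x, y} : Set V)) hri hw
        (fun h => hxD h.1) ?_
      · obtain ⟨c', hc', hri'⟩ := htr
        have hsub' : (D \ {z}) ∪ (({x, y} : Set V) ∩ (Set.univ \ {z})) ⊆ Hz := by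
          rintro u (hu | hu)
          · exact hDzHz hu
          · rcases hu.1 with rfl | h'
            · exact hxHz
            · rw [Set.mem_singleton_iff] at h'
              exact h' ▸ hyHz
        rcases hc'.1 with rfl | h'
        · exact Or.inl (hri'.mono hsub')
        · rw [Set.mem_singleton_iff] at h'
          subst h'
          exact Or.inr (hri'.mono hsub')
      · intro a ha w' hw' hadj
        by_cases hw'U : w' ∈ Set.univ \ ({x, y} : Set V)
        · exact Or.inl ⟨hDcl a ha.1 w' hw'U hadj, hw'.2⟩
        · refine Or.inr ?_
          by_contra hc
          exact hw'U ⟨trivial, hc⟩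
    by_cases hlink : RI G Hz x y
    · refine hnc2 ⟨⟨x, hxHz⟩, fun u hu v hv => ?_⟩
      have reach : ∀ u ∈ Hz, RI G Hz u x := by
        intro u hu
        rcases hHzmem u hu with rfl | rfl | hu'
        · exact .refl hxHz
        · exact hlink.symm
        · rcases step1 u hu' with h | h
          · exact h
          · exact h.append hlink.symm
      exact (reach u hu).append (reach v hv).symm
    · set Ky := Kset (G := G) Hz y with hKy
      have hyKy : y ∈ Ky := mem_Kset_self hyHz
      have hxKy : x ∉ Ky := fun h => hlink (RI.symm h)
      set Q : Set V := Ky \ {y} with hQ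
      have hQsub : Q ⊆ D \ {z} := by
        rintro a ⟨haKy, hay⟩
        rcases hHzmem a (Kset_subset haKy) with rfl | rfl | h
        · exact absurd haKy hxKy
        · exact absurd rfl hay
        · exact h
      by_cases hQne : Q.Nonempty
      · refine frag_lt hmin hyz ?_ ?_ hQne ?_ ?_
        · intro a haQ w hw hadj
          have haD : a ∈ D \ {z} := hQsub haQ
          have hwy : w ≠ y := fun h => hw.2 (h ▸ Set.mem_insert _ _)
          have hwz : w ≠ z := fun h => hw.2 (h ▸ Set.mem_insert_of_mem _ rfl)
          by_cases hwU : w ∈ Set.univ \ ({x, y} : Set V)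
          · have hwD : w ∈ D := hDcl a haD.1 w hwU hadj
            have hwHz : w ∈ Hz := hDzHz ⟨hwD, fun h => hwz (Set.mem_singleton_iff.1 h)⟩
            exact ⟨Kset_closed haQ.1 hwHz hadj, fun h => hwy (Set.mem_singleton_iff.1 h)⟩
          · have : w ∈ ({x, y} : Set V) := by
              by_contra hc; exact hwU ⟨trivial, hc⟩
            rcases this with rfl | h'
            · exact absurd (Kset_closed haQ.1 hxHz hadj) hxKy
            · rw [Set.mem_singleton_iff] at h'
              exact absurd h' hwy
        · intro a haQ
          have haD := hQsub haQ
          refine ⟨trivial, ?_⟩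
          rintro (rfl | h)
          · exact haQ.2 rfl
          · rw [Set.mem_singleton_iff] at h
            exact haD.2 (h ▸ rfl)
        · refine ⟨x, ⟨trivial, ?_⟩, fun h => hxD (hQsub h).1⟩
          rintro (rfl | h)
          · exact hxy rfl
          · rw [Set.mem_singleton_iff] at h
            exact hxz h
        · have h1' : Q.ncard ≤ (D \ {z}).ncard := Set.ncard_le_ncard hQsub (Set.toFinite _)
          have h2' : (D \ {z}).ncard = D.ncard - 1 :=
            Set.ncard_diff_singleton_of_mem hzD
          have h3' := Set.ncard_pos (Set.toFinite D) |>.2 ⟨z, hzD⟩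
          omega
      · have hKyall : ∀ a ∈ Ky, a = y := by
          intro a ha
          by_contra hay
          exact hQne ⟨a, ha, fun h => hay (Set.mem_singleton_iff.1 h)⟩
        by_cases hDz : (D \ {z}).Nonempty
        · refine frag_lt hmin hxz ?_ ?_ hDz ?_ ?_
          · intro a haD w hw hadj
            have hwx : w ≠ x := fun h => hw.2 (h ▸ Set.mem_insert _ _)
            have hwz : w ≠ z := fun h => hw.2 (h ▸ Set.mem_insert_of_mem _ rfl)
            by_cases hwU : w ∈ Set.univ \ ({x, y} : Set V)
            · exact ⟨hDcl a haD.1 w hwU hadj, fun h => hwz (Set.mem_singleton_iff.1 h)⟩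
            · have : w ∈ ({x, y} : Set V) := by
                by_contra hc; exact hwU ⟨trivial, hc⟩
              rcases this with rfl | h'
              · exact absurd rfl hwx
              · rw [Set.mem_singleton_iff] at h'
                subst h'
                have haKy : a ∈ Ky := Kset_closed hyKy (hDzHz haD) hadj.symm
                exact absurd (hKyall a haKy) (fun h => haD.2 (by
                  rw [h] at haD
                  exact absurd haD.1 hyD) )
          · intro a haD
            refine ⟨trivial, ?_⟩
            rintro (rfl | h)
            · exact hxD haD.1
            · rw [Set.mem_singleton_iff] at h
              exact haD.2 (h ▸ rfl)
          · refine ⟨y, ⟨trivial, ?_⟩, fun h => hyD h.1⟩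
            rintro (rfl | h)
            · exact hxy rfl
            · rw [Set.mem_singleton_iff] at h
              exact hyz h
          · have h2' : (D \ {z}).ncard = D.ncard - 1 :=
              Set.ncard_diff_singleton_of_mem hzD
            have h3' := Set.ncard_pos (Set.toFinite D) |>.2 ⟨z, hzD⟩
            omega
        · have hDzempty : D = {z} := by
            ext a
            constructor
            · intro ha
              by_contra hc
              exact hDz ⟨a, ha, hc⟩
            · rintro rfl
              exact hzD
          refine min_degree_three h1 hdel hn4 z x y (fun h => hxz h.symm) (fun h => hyz h.symm) ?_
          intro w hw
          have := hnbD z hzD w hw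
          rcases Set.mem_insert_iff.1 this with rfl | h
          · exact Set.mem_insert _ _
          rcases Set.mem_insert_iff.1 h with rfl | h'
          · exact Set.mem_insert_of_mem _ rfl
          · rw [hDzempty, Set.mem_singleton_iff] at h'
            exact absurd h' hw.ne'

/-- Case B: the complement side `{x,y} ∪ R` is 2-connected when `R` is disconnected. -/
lemma twoConnOn_complement_side (h1 : IsTwoConnected G) {x y : V} (hxy : x ≠ y)
    (hDcl : ∀ a ∈ D, ∀ w ∈ Set.univ \ ({x, y} : Set V), G.Adj a w → w ∈ D)
    (hRne : ((Set.univ \ ({x, y} : Set V)) \ D).Nonempty)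
    (hconnR' : ¬ Conn G ((Set.univ \ ({x, y} : Set V)) \ D)) :
    TwoConnOn G (insert x (insert y ((Set.univ \ ({x, y} : Set V)) \ D))) := by
  have h2c := conn_compl_singleton_of_isTwoConnected h1
  set U : Set V := Set.univ \ ({x, y} : Set V) with hU
  set R : Set V := U \ D with hR
  have hxU : x ∉ U := fun h => h.2 (Set.mem_insert _ _)
  have hyU : y ∉ U := fun h => h.2 (Set.mem_insert_of_mem _ rfl)
  have hxR : x ∉ R := fun h => hxU h.1
  have hyR : y ∉ R := fun h => hyU h.1
  have hRcl : ∀ a ∈ R, ∀ w ∈ U, G.Adj a w → w ∈ R := by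
    intro a ha w hw hadj
    refine ⟨hw, fun hwD => ha.2 (hDcl w hwD a ha.1 hadj.symm)⟩
  have hKsub : ∀ r ∈ R, Kset (G := G) U r ⊆ R := fun r hr =>
    Kset_subset_closed hr hRcl
  have hKcl : ∀ r ∈ R, ∀ a ∈ Kset (G := G) U r, ∀ w ∈ U, G.Adj a w →
      w ∈ Kset (G := G) U r := fun r hr a ha w hw hadj => Kset_closed ha hw hadj
  -- attachments of each component
  have hatt : ∀ r ∈ R, (∃ z ∈ Kset (G := G) U r, G.Adj x z) ∧
      (∃ z ∈ Kset (G := G) U r, G.Adj y z) := by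
    intro r hr
    exact attach_pair h1 hxy ⟨r, mem_Kset_self hr.1⟩ Kset_subset (hKcl r hr)
  -- reach `x` within `insert x R`
  have reachx : ∀ u ∈ R, RI G (insert x R) u x := by
    intro u hu
    obtain ⟨⟨zx, hzx, hzxA⟩, -⟩ := hatt u hu
    have h₁ : RI G (Kset (G := G) U u) u zx :=
      (conn_Kset hu.1).2 u (mem_Kset_self hu.1) zx hzx
    have h₂ : RI G (insert x R) u zx :=
      h₁.mono (fun a ha => Set.mem_insert_of_mem _ (hKsub u hu ha))
    exact h₂.append (RI.single (Set.mem_insert_of_mem _ (hKsub u hu hzx))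
      (Set.mem_insert _ _) hzxA.symm)
  have reachy : ∀ u ∈ R, RI G (insert y R) u y := by
    intro u hu
    obtain ⟨-, ⟨zy, hzy, hzyA⟩⟩ := hatt u hu
    have h₁ : RI G (Kset (G := G) U u) u zy :=
      (conn_Kset hu.1).2 u (mem_Kset_self hu.1) zy hzy
    have h₂ : RI G (insert y R) u zy :=
      h₁.mono (fun a ha => Set.mem_insert_of_mem _ (hKsub u hu ha))
    exact h₂.append (RI.single (Set.mem_insert_of_mem _ (hKsub u hu hzy))
      (Set.mem_insert _ _) hzyA.symm)
  have hconnxR : Conn G (insert x R) := by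
    refine ⟨⟨x, Set.mem_insert _ _⟩, fun u hu v hv => ?_⟩
    have key : ∀ w ∈ insert x R, RI G (insert x R) w x := by
      intro w hw
      rcases Set.mem_insert_iff.1 hw with rfl | hw'
      · exact .refl (Set.mem_insert _ _)
      · exact reachx w hw'
    exact (key u hu).append (key v hv).symm
  have hconnyR : Conn G (insert y R) := by
    refine ⟨⟨y, Set.mem_insert _ _⟩, fun u hu v hv => ?_⟩
    have key : ∀ w ∈ insert y R, RI G (insert y R) w y := by
      intro w hw
      rcases Set.mem_insert_iff.1 hw with rfl | hw'
      · exact .refl (Set.mem_insert _ _)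
      · exact reachy w hw'
    exact (key u hu).append (key v hv).symm
  obtain ⟨r₀, hr₀⟩ := hRne
  obtain ⟨⟨zx₀, hzx₀, hzx₀A⟩, -⟩ := hatt r₀ hr₀
  have hW : Conn G (insert x (insert y R)) :=
    conn_insert hconnyR ⟨zx₀, Set.mem_insert_of_mem _ (hKsub r₀ hr₀ hzx₀), hzx₀A⟩
  refine ⟨hW, fun c hc => ?_⟩
  rcases Set.mem_insert_iff.1 hc with rfl | hc'
  · rw [Set.insert_diff_self_of_notMem (by
      intro h
      rcases Set.mem_insert_iff.1 h with h' | h'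
      · exact hxy h'
      · exact hxR h')]
    exact hconnyR
  rcases Set.mem_insert_iff.1 hc' with rfl | hzR
  · have hset : (insert x (insert c R)) \ {c} = insert x R := by
      ext u
      simp only [Set.mem_diff, Set.mem_insert_iff, Set.mem_singleton_iff]
      constructor
      · rintro ⟨h | h | h, hne⟩
        · exact Or.inl h
        · exact absurd h hne
        · exact Or.inr h
      · rintro (rfl | h)
        · exact ⟨Or.inl rfl, hxy⟩
        · exact ⟨Or.inr (Or.inr h), fun hc => hyR (hc ▸ h)⟩
    rw [hset]
    exact hconnxR
  · -- removing z ∈ R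
    set z := c with hzdef
    have hxz : x ≠ z := fun h => hxR (h ▸ hzR)
    have hyz : y ≠ z := fun h => hyR (h ▸ hzR)
    set W' : Set V := (insert x (insert y R)) \ {z} with hW'
    have hxW' : x ∈ W' := ⟨Set.mem_insert _ _, fun h => hxz (Set.mem_singleton_iff.1 h)⟩
    have hyW' : y ∈ W' := ⟨Set.mem_insert_of_mem _ (Set.mem_insert _ _),
      fun h => hyz (Set.mem_singleton_iff.1 h)⟩
    have hRzW' : R \ {z} ⊆ W' := fun a ha =>
      ⟨Set.mem_insert_of_mem _ (Set.mem_insert_of_mem _ ha.1), ha.2⟩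
    -- a component of R avoiding z
    have hz' : ∃ r ∈ R, z ∉ Kset (G := G) U r := by
      by_contra hall
      push_neg at hall
      refine hconnR' ⟨⟨z, hzR⟩, fun u hu v hv => ?_⟩
      have h₁ : RI G R u z := (ri_Kset (RI.refl hu.1) (hall u hu)).mono (hKsub u hu)
      have h₂ : RI G R v z := (ri_Kset (RI.refl hv.1) (hall v hv)).mono (hKsub v hv)
      exact h₁.append h₂.symm
    obtain ⟨r₁, hr₁, hzK₁⟩ := hz'
    have hK₁sub : Kset (G := G) U r₁ ⊆ R \ {z} := by
      intro a ha
      exact ⟨hKsub r₁ hr₁ ha, fun h => hzK₁ ((Set.mem_singleton_iff.1 h) ▸ ha)⟩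
    obtain ⟨⟨zx₁, hzx₁, hzx₁A⟩, ⟨zy₁, hzy₁, hzy₁A⟩⟩ := hatt r₁ hr₁
    have hlink : RI G W' x y := by
      have h₁ : RI G (Kset (G := G) U r₁) zx₁ zy₁ :=
        (conn_Kset hr₁.1).2 zx₁ hzx₁ zy₁ hzy₁
      have h₂ : RI G W' zx₁ zy₁ := h₁.mono (fun a ha => hRzW' (hK₁sub ha))
      refine (RI.single hxW' (hRzW' (hK₁sub hzx₁)) hzx₁A).append
        (h₂.append (RI.single (hRzW' (hK₁sub hzy₁)) hyW' hzy₁A.symm))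
    have step : ∀ w ∈ R \ {z}, RI G W' w x ∨ RI G W' w y := by
      intro w hw
      have hri : RI G (Set.univ \ {z}) w x :=
        (h2c z).2 w ⟨trivial, hw.2⟩ x ⟨trivial, fun h => hxz (Set.mem_singleton_iff.1 h)⟩
      have htr := ri_trunc (C := ({x, y} : Set V)) hri hw (fun h => hxR h.1) ?_
      · obtain ⟨c', hc', hri'⟩ := htr
        have hsub' : (R \ {z}) ∪ (({x, y} : Set V) ∩ (Set.univ \ {z})) ⊆ W' := by
          rintro u (hu | hu)
          · exact hRzW' hu
          · rcases hu.1 with rfl | h'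
            · exact hxW'
            · rw [Set.mem_singleton_iff] at h'
              exact h' ▸ hyW'
        rcases hc'.1 with rfl | h'
        · exact Or.inl (hri'.mono hsub')
        · rw [Set.mem_singleton_iff] at h'
          subst h'
          exact Or.inr (hri'.mono hsub')
      · intro a ha w' hw' hadj
        by_cases hw'U : w' ∈ U
        · exact Or.inl ⟨hRcl a ha.1 w' hw'U hadj, hw'.2⟩
        · refine Or.inr ?_
          by_contra hcm
          exact hw'U ⟨trivial, hcm⟩
    refine ⟨⟨x, hxW'⟩, fun u hu v hv => ?_⟩
    have key : ∀ w ∈ W', RI G W' w x := by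
      intro w hw
      obtain ⟨hw1, hw2⟩ := hw
      rcases Set.mem_insert_iff.1 hw1 with rfl | h
      · exact .refl ⟨hw1, hw2⟩
      rcases Set.mem_insert_iff.1 h with rfl | h'
      · exact hlink.symm
      · rcases step w ⟨h', fun hm => hw2 hm⟩ with hh | hh
        · exact hh
        · exact hh.append hlink.symm
    exact (key u hu).append (key v hv).symm

/-- Deriving a contradiction from a second cut pair meeting only a small leftover. -/
lemma cut_contradiction (hmin : ∀ D' : Set V, IsFragment G D' → D.ncard ≤ D'.ncard)
    {b c : V} (hbc : b ≠ c) (hnc : ¬ Conn G (Set.univ \ ({b, c} : Set V)))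
    {W : Set V} (hW : Conn G W) (hWsub : W ⊆ Set.univ \ ({b, c} : Set V))
    (hrest : ∀ u ∈ Set.univ \ ({b, c} : Set V), u ∉ W → u ∈ D \ {b}) (hbD : b ∈ D) :
    False := by
  refine hnc (conn_of_parts hW hWsub ?_)
  intro w hw
  by_contra hem
  rw [Set.not_nonempty_iff_eq_empty] at hem
  have hKsub : Kset (G := G) (Set.univ \ ({b, c} : Set V)) w ⊆ D \ {b} := by
    intro u hu
    refine hrest u (Kset_subset hu) ?_
    intro huW
    exact Set.eq_empty_iff_forall_notMem.1 hem u ⟨hu, huW⟩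
  have hfrag : IsFragment G (Kset (G := G) (Set.univ \ ({b, c} : Set V)) w) :=
    ⟨b, c, hbc, hnc, w, hw, rfl⟩
  have h₁ := hmin _ hfrag
  have h₂ := Set.ncard_le_ncard hKsub (Set.toFinite _)
  have h₃ : (D \ {b}).ncard = D.ncard - 1 :=
    Set.ncard_diff_singleton_of_mem hbD
  have h₄ := Set.ncard_pos (Set.toFinite D) |>.2 ⟨b, hbD⟩
  omega

lemma edge_partition {x y : V} (hxyA : ¬ G.Adj x y)
    (hnbD : ∀ b ∈ D, ∀ w : V, G.Adj b w → w ∈ insert x (insert y D)) :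
    G.edgeSet.ncard = (edgesIn G (Set.univ \ D)).ncard +
      (edgesIn G (insert x (insert y D))).ncard := by
  have hun : G.edgeSet = edgesIn G (Set.univ \ D) ∪ edgesIn G (insert x (insert y D)) := by
    ext e
    induction e using Sym2.ind with
    | _ u v =>
      constructor
      · intro he
        have hadj : G.Adj u v := (G.mem_edgeSet).1 he
        by_cases huD : u ∈ D
        · refine Or.inr ⟨he, ?_⟩
          intro w hw
          rcases Sym2.mem_iff.1 hw with rfl | rfl
          · exact Set.mem_insert_of_mem _ (Set.mem_insert_of_mem _ huD)
          · exact hnbD u huD w hadj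
        · by_cases hvD : v ∈ D
          · refine Or.inr ⟨he, ?_⟩
            intro w hw
            rcases Sym2.mem_iff.1 hw with rfl | rfl
            · exact hnbD v hvD w hadj.symm
            · exact Set.mem_insert_of_mem _ (Set.mem_insert_of_mem _ hvD)
          · refine Or.inl ⟨he, ?_⟩
            intro w hw
            rcases Sym2.mem_iff.1 hw with rfl | rfl
            · exact ⟨trivial, huD⟩
            · exact ⟨trivial, hvD⟩
      · rintro (h | h) <;> exact h.1
  have hdisj : Disjoint (edgesIn G (Set.univ \ D)) (edgesIn G (insert x (insert y D))) := by
    refine Set.disjoint_left.2 ?_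
    intro e
    induction e using Sym2.ind with
    | _ u v =>
      intro h1' h2'
      have hadj : G.Adj u v := (G.mem_edgeSet).1 h1'.1
      have hu1 : u ∉ D := (h1'.2 u (by simp)).2
      have hv1 : v ∉ D := (h1'.2 v (by simp)).2
      have hu2 := h2'.2 u (by simp)
      have hv2 := h2'.2 v (by simp)
      rcases Set.mem_insert_iff.1 hu2 with rfl | hu2'
      · rcases Set.mem_insert_iff.1 hv2 with rfl | hv2'
        · exact G.irrefl hadj
        rcases Set.mem_insert_iff.1 hv2' with rfl | hv2''
        · exact hxyA hadj
        · exact hv1 hv2''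
      rcases Set.mem_insert_iff.1 hu2' with rfl | hu2''
      · rcases Set.mem_insert_iff.1 hv2 with rfl | hv2'
        · exact hxyA hadj.symm
        rcases Set.mem_insert_iff.1 hv2' with rfl | hv2''
        · exact G.irrefl hadj
        · exact hv1 hv2''
      · exact hu1 hu2''
  rw [hun, Set.ncard_union_eq hdisj (Set.toFinite _) (Set.toFinite _)]

end Fragments

end Aux


theorem stmt14 (δ : ℕ) (hδ : 2 < δ) :
    ∀ (V : Type*) [Fintype V] [DecidableEq V] (G : SimpleGraph V),
      ¬ (IsTwoConnected G ∧
        (∀ e ∈ G.edgeSet, IsTwoConnected (G.deleteEdges {e})) ∧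
        (∀ e ∈ G.edgeSet, IsTwoConnected (contractEdges G {e})) ∧
        G.edgeSet.ncard = δ * (Nat.card V - 1) ∧
        ∀ S : Set V, IsGoodFlat G S → 2 < S.ncard →
          (edgesIn G S).ncard + 1 = δ * (S.ncard - 1)) := by
  intro V _ _ G hcon
  obtain ⟨h1, h2, h3, h4, h5⟩ := hcon
  classical
  have h2c := conn_compl_singleton_of_isTwoConnected h1
  haveI hne : Nonempty V := h1.1.nonempty
  -- at least two vertices
  have hn2 : 2 ≤ Nat.card V := by
    by_contra h
    push_neg at h
    have hF : Fintype.card V = 1 := by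
      rw [← Nat.card_eq_fintype_card]
      have := Nat.card_pos (α := V)
      omega
    have hsing : ∀ a b : V, a = b := fun a b =>
      Fintype.card_le_one_iff.1 (le_of_eq hF) a b
    obtain ⟨u, hu⟩ := (h1.2 (Classical.arbitrary V)).nonempty
    exact hu (hsing u _)
  -- at least four vertices
  have hEbound : G.edgeSet.ncard ≤ (Nat.card V).choose 2 := by
    have h' := G.card_edgeFinset_le_card_choose_two
    rwa [← Set.ncard_coe_finset, SimpleGraph.coe_edgeFinset, ← Nat.card_eq_fintype_card] at h'
  have hn4 : 4 ≤ Nat.card V := by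
    by_contra h
    push_neg at h
    have hch : (Nat.card V).choose 2 ≤ 3 := by
      calc (Nat.card V).choose 2 ≤ (3).choose 2 := Nat.choose_le_choose 2 (by omega)
        _ = 3 := by decide
    have h31 : 3 * (Nat.card V - 1) ≤ δ * (Nat.card V - 1) :=
      Nat.mul_le_mul_right _ (by omega)
    have hE3 : δ * (Nat.card V - 1) ≤ 3 := by
      rw [← h4]
      exact le_trans hEbound hch
    have hncard2 : Nat.card V = 2 := by omega
    rw [hncard2] at hEbound
    rw [hncard2] at h4
    simp only [Nat.choose_self] at hEbound
    omega
  by_cases hP : ∀ b c : V, b ≠ c → Conn G (Set.univ \ ({b, c} : Set V))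
  · -- G is 3-connected: all degrees δ + 1, counting contradiction
    have hdeg : ∀ b : V, (G.neighborSet b).ncard = δ + 1 := by
      intro b
      refine degree_of_removable h1 h4 h5 hn4 ?_
      intro c hc
      have hbc : b ≠ c := fun h => hc.2 (h ▸ rfl)
      have hset : (Set.univ \ {b}) \ {c} = Set.univ \ ({b, c} : Set V) := by
        ext u
        simp only [Set.mem_diff, Set.mem_singleton_iff, Set.mem_insert_iff, Set.mem_univ,
          true_and]
        tauto
      rw [hset]
      exact hP b c hbc
    have hsum := sum_nbrs_eq G
    have e1 : ∑ v : V, (G.neighborSet v).ncard = Fintype.card V * (δ + 1) := by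
      rw [Finset.sum_congr rfl fun v _ => hdeg v, Finset.sum_const, smul_eq_mul,
        Finset.card_univ]
    rw [e1] at hsum
    rw [h4] at hsum
    have hNn : Nat.card V = Fintype.card V := Nat.card_eq_fintype_card
    rw [hNn] at h4 hn4
    have hmul1 : Fintype.card V * (δ + 1) = Fintype.card V * δ + Fintype.card V :=
      Nat.mul_succ _ _
    have hmul2 : Fintype.card V * δ = δ * (Fintype.card V - 1) + δ := by
      obtain ⟨k, hk⟩ : ∃ k, Fintype.card V = k + 1 := ⟨Fintype.card V - 1, by omega⟩
      rw [hk, Nat.succ_mul, Nat.add_sub_cancel, Nat.mul_comm]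
    have hP3 : 3 * (Fintype.card V - 1) ≤ δ * (Fintype.card V - 1) :=
      Nat.mul_le_mul_right _ (by omega)
    have hQ3 : δ * 3 ≤ δ * (Fintype.card V - 1) := Nat.mul_le_mul_left _ (by omega)
    rw [hNn] at hsum
    omega
  · -- there is a 2-cut
    push_neg at hP
    obtain ⟨x₀, y₀, hxy₀, hnc₀⟩ := hP
    have hUne : ∀ a b : V, ∃ u, u ∈ Set.univ \ ({a, b} : Set V) := by
      intro a b
      obtain ⟨w, hw1, hw2⟩ := exists_third (by omega) a b
      refine ⟨w, trivial, ?_⟩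
      rintro (rfl | h)
      · exact hw1 rfl
      · rw [Set.mem_singleton_iff] at h
        exact hw2 h
    have hfragne : ∃ D' : Set V, IsFragment G D' := by
      obtain ⟨u, hu⟩ := hUne x₀ y₀
      exact ⟨_, x₀, y₀, hxy₀, hnc₀, u, hu, rfl⟩
    have hsne : {k | ∃ D' : Set V, IsFragment G D' ∧ D'.ncard = k}.Nonempty := by
      obtain ⟨D', hD'⟩ := hfragne
      exact ⟨D'.ncard, D', hD', rfl⟩
    obtain ⟨D, hDfrag, hDcard⟩ := Nat.sInf_mem hsne
    have hmin : ∀ D' : Set V, IsFragment G D' → D.ncard ≤ D'.ncard := by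
      intro D' h
      rw [hDcard]
      exact Nat.sInf_le ⟨D', h, rfl⟩
    obtain ⟨x, y, hxy, hU, u₀, hu₀U, hDdef⟩ := hDfrag
    have hDsub : D ⊆ Set.univ \ ({x, y} : Set V) := hDdef ▸ Kset_subset
    have hDne : D.Nonempty := ⟨u₀, hDdef ▸ mem_Kset_self hu₀U⟩
    have hDconn : Conn G D := hDdef ▸ conn_Kset hu₀U
    have hDcl : ∀ a ∈ D, ∀ w ∈ Set.univ \ ({x, y} : Set V), G.Adj a w → w ∈ D := by
      rw [hDdef]
      exact fun a ha w hw hadj => Kset_closed ha hw hadj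
    clear hDdef hDcard
    have hxD : x ∉ D := fun h => (hDsub h).2 (Set.mem_insert _ _)
    have hyD : y ∉ D := fun h => (hDsub h).2 (Set.mem_insert_of_mem _ rfl)
    have hxyA : ¬ G.Adj x y := by
      intro hadj
      exact hU (conn_compl_pair_of_contract hadj (h3 _ ((G.mem_edgeSet).2 hadj)) (hUne x y))
    set R : Set V := (Set.univ \ ({x, y} : Set V)) \ D with hRdef
    have hxR : x ∉ R := fun h => h.1.2 (Set.mem_insert _ _)
    have hyR : y ∉ R := fun h => h.1.2 (Set.mem_insert_of_mem _ rfl)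
    have hbR : ∀ b ∈ D, b ∉ R := fun b hb h => h.2 hb
    have hRne : R.Nonempty := by
      by_contra hc
      rw [Set.not_nonempty_iff_eq_empty] at hc
      have hUD : Set.univ \ ({x, y} : Set V) = D := by
        refine Set.Subset.antisymm ?_ hDsub
        intro u hu
        by_contra huD
        have hmem : u ∈ R := ⟨hu, huD⟩
        rw [hc] at hmem
        exact hmem
      exact hU (hUD ▸ hDconn)
    have hRcl : ∀ a ∈ R, ∀ w ∈ Set.univ \ ({x, y} : Set V), G.Adj a w → w ∈ R := by
      intro a ha w hw hadj
      exact ⟨hw, fun hwD => ha.2 (hDcl w hwD a ha.1 hadj.symm)⟩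
    have hnbD : ∀ b ∈ D, ∀ w : V, G.Adj b w → w ∈ insert x (insert y D) := by
      intro b hb w hadj
      by_cases hwU : w ∈ Set.univ \ ({x, y} : Set V)
      · exact Set.mem_insert_of_mem _ (Set.mem_insert_of_mem _ (hDcl b hb w hwU hadj))
      · have hw' : w ∈ ({x, y} : Set V) := by
          by_contra hcm
          exact hwU ⟨trivial, hcm⟩
        rcases hw' with rfl | hw''
        · exact Set.mem_insert _ _
        · rw [Set.mem_singleton_iff] at hw''
          exact hw'' ▸ Set.mem_insert_of_mem _ (Set.mem_insert _ _)
    obtain ⟨⟨rx, hrx, hrxA⟩, ⟨ry, hry, hryA⟩⟩ := attach_pair h1 hxy hRne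
      (fun a ha => ha.1) hRcl
    have hd1 : 1 ≤ D.ncard := Set.ncard_pos (Set.toFinite D) |>.2 hDne
    by_cases hall : ∀ b ∈ D, ∀ c ∈ Set.univ \ {b}, Conn G ((Set.univ \ {b}) \ {c})
    · -- counting contradiction
      have hdegD : ∀ b ∈ D, (G.neighborSet b).ncard = δ + 1 := fun b hb =>
        degree_of_removable h1 h4 h5 hn4 (hall b hb)
      have hbound := degree_sum_bound hxy hxD hyD
        (fun b hb w hw => hnbD b hb w hw) hdegD hxyA
      have hHcard : (insert x (insert y D)).ncard = D.ncard + 2 := by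
        rw [Set.ncard_insert_of_notMem (by
          intro h
          rcases Set.mem_insert_iff.1 h with h' | h'
          · exact hxy h'
          · exact hxD h') (Set.toFinite _),
          Set.ncard_insert_of_notMem hyD (Set.toFinite _)]
      have hmulB : D.ncard * (δ + 1) = δ * D.ncard + D.ncard := by
        rw [Nat.mul_succ, Nat.mul_comm]
      have hP3 : 3 * D.ncard ≤ δ * D.ncard := Nat.mul_le_mul_right _ (by omega)
      by_cases hconnR : Conn G R
      · -- CASE A: the flat is D ∪ {x, y}
        have hTC := twoConnOn_insert_pair h1 h2 hn4 hxy hDsub hDne hDconn hDcl hmin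
        have hcompset : Set.univ \ (insert x (insert y D)) = R := by
          ext u
          rw [hRdef]
          simp only [Set.mem_diff, Set.mem_insert_iff, Set.mem_univ, true_and,
            Set.mem_singleton_iff, not_or]
          tauto
        have heq := flat_eq h1 h5 hTC
          (by rw [hcompset]; exact hconnR) (by rw [hHcard]; omega)
        rw [hHcard] at heq
        have hsub1 : D.ncard + 2 - 1 = D.ncard + 1 := by omega
        rw [hsub1] at heq
        have hmulA : δ * (D.ncard + 1) = δ * D.ncard + δ := Nat.mul_succ _ _
        omega
      · -- CASE B: the flat is the complement of D
        have hTC := twoConnOn_complement_side h1 hxy hDcl hRne hconnR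
        have hcompset : Set.univ \ (insert x (insert y R)) = D := by
          ext u
          simp only [Set.mem_diff, Set.mem_insert_iff, Set.mem_univ, true_and, not_or]
          constructor
          · rintro ⟨hux, huy, huR⟩
            by_contra huD
            refine huR ⟨⟨trivial, ?_⟩, huD⟩
            rintro (h | h)
            · exact hux h
            · rw [Set.mem_singleton_iff] at h
              exact huy h
          · intro huD
            exact ⟨fun h => hxD (h ▸ huD), fun h => hyD (h ▸ huD),
              fun hR' => hR'.2 huD⟩
        have hWcard : (insert x (insert y R)).ncard = R.ncard + 2 := by
          rw [Set.ncard_insert_of_notMem (by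
            intro h
            rcases Set.mem_insert_iff.1 h with h' | h'
            · exact hxy h'
            · exact hxR h') (Set.toFinite _),
            Set.ncard_insert_of_notMem hyR (Set.toFinite _)]
        have hr1 : 1 ≤ R.ncard := Set.ncard_pos (Set.toFinite R) |>.2 hRne
        have heq : (edgesIn G (insert x (insert y R))).ncard + 1 =
            δ * ((insert x (insert y R)).ncard - 1) := flat_eq h1 h5 hTC
          (by rw [hcompset]; exact hDconn) (by rw [hWcard]; omega)
        rw [hWcard] at heq
        have hsub1 : R.ncard + 2 - 1 = R.ncard + 1 := by omega
        rw [hsub1] at heq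
        have hun : Set.univ \ D = insert x (insert y R) := by
          rw [← hcompset, Set.diff_diff_cancel_left (Set.subset_univ _)]
        have hpart := edge_partition (D := D) hxyA hnbD
        rw [hun] at hpart
        have hRD : R.ncard + 2 = (Set.univ \ D).ncard := by
          rw [hun, hWcard]
        have hcardU : D.ncard + R.ncard + 2 = Nat.card V := by
          have h' : (Set.univ \ D).ncard = Nat.card V - D.ncard := by
            rw [Set.ncard_diff (Set.subset_univ _) (Set.toFinite _), Set.ncard_univ]
          have hdle : D.ncard ≤ Nat.card V := by
            have := Set.ncard_le_ncard (Set.subset_univ D) (Set.toFinite _)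
            rwa [Set.ncard_univ] at this
          omega
        have hmulsplit : δ * (Nat.card V - 1) = δ * (R.ncard + 1) + δ * D.ncard := by
          have h' : Nat.card V - 1 = (R.ncard + 1) + D.ncard := by omega
          rw [h', Nat.mul_add]
        omega
    · -- a vertex of D lies in another 2-cut
      push_neg at hall
      obtain ⟨b, hbD, c, hcmem, hncc⟩ := hall
      have hbc : b ≠ c := fun h => hcmem.2 (h ▸ rfl)
      have hset : (Set.univ \ {b}) \ {c} = Set.univ \ ({b, c} : Set V) := by
        ext u
        simp only [Set.mem_diff, Set.mem_singleton_iff, Set.mem_insert_iff, Set.mem_univ,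
          true_and]
        tauto
      rw [hset] at hncc
      have hxb : x ≠ b := fun h => hxD (h ▸ hbD)
      have hyb : y ≠ b := fun h => hyD (h ▸ hbD)
      by_cases hconnR : Conn G R
      · -- CASE A
        by_cases hcR : c ∈ R
        · -- inline closure argument, W = (D ∪ {x,y}) \ {b}
          have hTC := twoConnOn_insert_pair h1 h2 hn4 hxy hDsub hDne hDconn hDcl hmin
          have hxc : x ≠ c := fun h => hxR (h ▸ hcR)
          have hyc : y ≠ c := fun h => hyR (h ▸ hcR)
          refine hncc (conn_of_parts (W := (insert x (insert y D)) \ {b})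
            (hTC.2 b (Set.mem_insert_of_mem _ (Set.mem_insert_of_mem _ hbD))) ?_ ?_)
          · rintro u ⟨hu, hub⟩
            refine ⟨trivial, ?_⟩
            rintro (rfl | h)
            · exact hub rfl
            · rw [Set.mem_singleton_iff] at h
              subst h
              rcases Set.mem_insert_iff.1 hu with h' | h'
              · exact hxc h'.symm
              rcases Set.mem_insert_iff.1 h' with h'' | h''
              · exact hyc h''.symm
              · exact hcR.2 h''
          · intro w hw
            by_contra hem
            rw [Set.not_nonempty_iff_eq_empty] at hem
            have hKsub : Kset (G := G) (Set.univ \ ({b, c} : Set V)) w ⊆ R \ {c} := by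
              intro u hu
              have huU := Kset_subset hu
              have huW : u ∉ (insert x (insert y D)) \ {b} := fun h =>
                Set.eq_empty_iff_forall_notMem.1 hem u ⟨hu, h⟩
              have hub : u ≠ b := fun h => huU.2 (h ▸ Set.mem_insert _ _)
              have huc : u ≠ c := fun h => huU.2 (h ▸ Set.mem_insert_of_mem _ rfl)
              have huH : u ∉ insert x (insert y D) := fun h => huW ⟨h, fun h' =>
                hub (Set.mem_singleton_iff.1 h')⟩
              refine ⟨⟨⟨trivial, ?_⟩, fun hD' => huH
                (Set.mem_insert_of_mem _ (Set.mem_insert_of_mem _ hD'))⟩, fun h =>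
                huc (Set.mem_singleton_iff.1 h)⟩
              rintro (rfl | h)
              · exact huH (Set.mem_insert _ _)
              · rw [Set.mem_singleton_iff] at h
                exact huH (h ▸ Set.mem_insert_of_mem _ (Set.mem_insert _ _))
            have hKcl : ∀ a ∈ Kset (G := G) (Set.univ \ ({b, c} : Set V)) w,
                ∀ w' ∈ Set.univ \ {c}, G.Adj a w' → w' ∈
                Kset (G := G) (Set.univ \ ({b, c} : Set V)) w := by
              intro a ha w' hw' hadj
              by_cases hw'bc : w' ∈ Set.univ \ ({b, c} : Set V)
              · exact Kset_closed ha hw'bc hadj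
              · have : w' = b := by
                  by_contra hb'
                  refine hw'bc ⟨trivial, ?_⟩
                  rintro (rfl | h)
                  · exact hb' rfl
                  · rw [Set.mem_singleton_iff] at h
                    exact hw'.2 (h ▸ rfl)
                subst this
                have haR : a ∈ R := (hKsub ha).1
                exact absurd (hDcl w' hbD a haR.1 hadj.symm) haR.2
            have hwmem : w ∈ Kset (G := G) (Set.univ \ ({b, c} : Set V)) w :=
              mem_Kset_self hw
            refine absurd (h2c c) (not_conn_of_closed ⟨w, hwmem⟩ ?_ ?_ hKcl)
            · intro a ha
              exact ⟨trivial, fun h => (Kset_subset ha).2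
                ((Set.mem_singleton_iff.1 h) ▸ Set.mem_insert_of_mem _ rfl)⟩
            · exact ⟨x, ⟨trivial, fun h => hxc (Set.mem_singleton_iff.1 h)⟩,
                fun h => hxR (hKsub h).1⟩
        · -- c ∉ R
          have hT'yR : Conn G (insert y R) := conn_insert hconnR ⟨ry, hry, hryA⟩
          have hT'xR : Conn G (insert x R) := conn_insert hconnR ⟨rx, hrx, hrxA⟩
          have hT'conn : Conn G (insert x (insert y R)) :=
            conn_insert hT'yR ⟨rx, Set.mem_insert_of_mem _ hrx, hrxA⟩
          by_cases hcD : c ∈ D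
          · refine cut_contradiction hmin hbc hncc hT'conn ?_ ?_ hbD
            · intro u hu
              refine ⟨trivial, ?_⟩
              have hunD : u ∉ D := by
                rcases Set.mem_insert_iff.1 hu with rfl | h'
                · exact hxD
                rcases Set.mem_insert_iff.1 h' with rfl | h''
                · exact hyD
                · exact h''.2
              rintro (rfl | h)
              · exact hunD hbD
              · rw [Set.mem_singleton_iff] at h
                exact hunD (h ▸ hcD)
            · intro u hu huW
              have huD : u ∈ D := by
                by_contra huD
                refine huW ?_
                by_cases hux : u = x
                · exact hux ▸ Set.mem_insert _ _
                by_cases huy : u = y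
                · exact huy ▸ Set.mem_insert_of_mem _ (Set.mem_insert _ _)
                · exact Set.mem_insert_of_mem _ (Set.mem_insert_of_mem _
                    ⟨⟨trivial, by
                      rintro (rfl | h)
                      · exact hux rfl
                      · rw [Set.mem_singleton_iff] at h
                        exact huy h⟩, huD⟩)
              exact ⟨huD, fun h => hu.2 ((Set.mem_singleton_iff.1 h) ▸ Set.mem_insert _ _)⟩
          · -- c = x or c = y
            have hcxy : c = x ∨ c = y := by
              by_contra hcm
              push_neg at hcm
              exact hcR ⟨⟨trivial, by
                rintro (rfl | h)
                · exact hcm.1 rfl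
                · rw [Set.mem_singleton_iff] at h
                  exact hcm.2 h⟩, hcD⟩
            rcases hcxy with hcx | hcy
            · -- c = x, W = insert y R
              rw [hcx] at hncc hbc
              refine cut_contradiction hmin hbc hncc hT'yR ?_ ?_ hbD
              · intro u hu
                refine ⟨trivial, ?_⟩
                rintro (h | h)
                · rcases Set.mem_insert_iff.1 (h ▸ hu) with h' | h'
                  · exact hyb h'.symm
                  · exact hbR _ hbD h'
                · rw [Set.mem_singleton_iff] at h
                  rcases Set.mem_insert_iff.1 (h ▸ hu) with h' | h'
                  · exact hxy h'
                  · exact hxR h'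
              · intro u hu huW
                have hub : u ≠ b := fun h => hu.2 (h ▸ Set.mem_insert _ _)
                have hux : u ≠ x := fun h => hu.2 (h ▸ Set.mem_insert_of_mem _ rfl)
                have huy : u ≠ y := fun h => huW (h ▸ Set.mem_insert _ _)

                have huD : u ∈ D := by
                  by_contra huD
                  exact huW (Set.mem_insert_of_mem _ ⟨⟨trivial, by
                    rintro (rfl | h)
                    · exact hux rfl
                    · rw [Set.mem_singleton_iff] at h
                      exact huy h⟩, huD⟩)
                exact ⟨huD, fun h => hub (Set.mem_singleton_iff.1 h)⟩
            · -- c = y, W = insert x R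
              rw [hcy] at hncc hbc
              refine cut_contradiction hmin hbc hncc hT'xR ?_ ?_ hbD
              · intro u hu
                refine ⟨trivial, ?_⟩
                rintro (h | h)
                · rcases Set.mem_insert_iff.1 (h ▸ hu) with h' | h'
                  · exact hxb h'.symm
                  · exact hbR _ hbD h'
                · rw [Set.mem_singleton_iff] at h
                  rcases Set.mem_insert_iff.1 (h ▸ hu) with h' | h'
                  · exact hxy h'.symm
                  · exact hyR h'
              · intro u hu huW
                have hub : u ≠ b := fun h => hu.2 (h ▸ Set.mem_insert _ _)
                have huy : u ≠ y := fun h => hu.2 (h ▸ Set.mem_insert_of_mem _ rfl)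
                have hux : u ≠ x := fun h => huW (h ▸ Set.mem_insert _ _)
                have huD : u ∈ D := by
                  by_contra huD
                  exact huW (Set.mem_insert_of_mem _ ⟨⟨trivial, by
                    rintro (rfl | h)
                    · exact hux rfl
                    · rw [Set.mem_singleton_iff] at h
                      exact huy h⟩, huD⟩)
                exact ⟨huD, fun h => hub (Set.mem_singleton_iff.1 h)⟩
      · -- CASE B
        have hTC := twoConnOn_complement_side h1 hxy hDcl hRne hconnR
        by_cases hcT : c ∈ insert x (insert y R)
        · refine cut_contradiction hmin hbc hncc (hTC.2 c hcT) ?_ ?_ hbD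
          · rintro u ⟨hu, huc⟩
            refine ⟨trivial, ?_⟩
            rintro (h | h)
            · rcases Set.mem_insert_iff.1 (h ▸ hu) with h' | h'
              · exact hxb h'.symm
              rcases Set.mem_insert_iff.1 h' with h'' | h''
              · exact hyb h''.symm
              · exact hbR _ hbD h''
            · rw [Set.mem_singleton_iff] at h
              exact huc (Set.mem_singleton_iff.2 h)
          · intro u hu huW
            have hub : u ≠ b := fun h => hu.2 (h ▸ Set.mem_insert _ _)
            have huc : u ≠ c := fun h => hu.2 (h ▸ Set.mem_insert_of_mem _ rfl)
            have huT : u ∉ insert x (insert y R) := fun h => huW ⟨h, fun h' =>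
              huc (Set.mem_singleton_iff.1 h')⟩
            have hux : u ≠ x := fun h => huT (h ▸ Set.mem_insert _ _)
            have huy : u ≠ y := fun h => huT (h ▸ Set.mem_insert_of_mem _ (Set.mem_insert _ _))
            have huD : u ∈ D := by
              by_contra huD
              exact huT (Set.mem_insert_of_mem _ (Set.mem_insert_of_mem _ ⟨⟨trivial, by
                rintro (rfl | h)
                · exact hux rfl
                · rw [Set.mem_singleton_iff] at h
                  exact huy h⟩, huD⟩))
            exact ⟨huD, fun h => hub (Set.mem_singleton_iff.1 h)⟩
        · have hcD : c ∈ D := by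
            by_contra hcD
            have hcx : c ≠ x := fun h => hcT (h ▸ Set.mem_insert _ _)
            have hcy : c ≠ y := fun h => hcT (h ▸ Set.mem_insert_of_mem _ (Set.mem_insert _ _))
            exact hcT (Set.mem_insert_of_mem _ (Set.mem_insert_of_mem _ ⟨⟨trivial, by
              rintro (rfl | h)
              · exact hcx rfl
              · rw [Set.mem_singleton_iff] at h
                exact hcy h⟩, hcD⟩))
          refine cut_contradiction hmin hbc hncc hTC.1 ?_ ?_ hbD
          · intro u hu
            refine ⟨trivial, ?_⟩
            have hunD : u ∉ D := by
              rcases Set.mem_insert_iff.1 hu with rfl | h'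
              · exact hxD
              rcases Set.mem_insert_iff.1 h' with rfl | h''
              · exact hyD
              · exact h''.2
            rintro (rfl | h)
            · exact hunD hbD
            · rw [Set.mem_singleton_iff] at h
              exact hunD (h ▸ hcD)
          · intro u hu huW
            have hub : u ≠ b := fun h => hu.2 (h ▸ Set.mem_insert _ _)
            have hux : u ≠ x := fun h => huW (h ▸ Set.mem_insert _ _)
            have huy : u ≠ y := fun h => huW (h ▸ Set.mem_insert_of_mem _ (Set.mem_insert _ _))
            have huD : u ∈ D := by
              by_contra huD
              exact huW (Set.mem_insert_of_mem _ (Set.mem_insert_of_mem _ ⟨⟨trivial, by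
                rintro (rfl | h)
                · exact hux rfl
                · rw [Set.mem_singleton_iff] at h
                  exact huy h⟩, huD⟩))
            exact ⟨huD, fun h => hub (Set.mem_singleton_iff.1 h)⟩


end Gor
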